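/- arXiv:1501.01731 — 5 statements merged into one kernel-verified Lean document; each statement's English description precedes it below -/
import Mathlib

section
/- Let p > 1. Suppose z : [0,1] → ℝ is twice continuously differentiable and satisfies z''(x) + z(x)|z(x)|^{p-1} = 0 for all x ∈ [0,1], z(0) = z(1) = 0, z(x) > 0 for all x ∈ (0,1), z(x) = z(1-x) for all x ∈ [0,1], and that z is the unique nonnegative nontrivial solution, i.e. every twice continuously differentiable w : [0,1] → ℝ with w'' + w|w|^{p-1} = 0 on [0,1], w(0) = w(1) = 0, w ≥ 0 and w not identically zero equals z. Then a twice continuously differentiable function w : [0,1] → ℝ satisfies w''(x) + w(x)|w(x)|^{p-1} = 0 for all x ∈ [0,1] together with w(0) = w(1) = 0 if and only if there exists n ∈ ℤ such that w = z^{(n)}. -/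
open Set

/-- The rescaled copy `z⁽ⁿ⁾` of `z` for `n : ℕ`:
`z⁽ⁿ⁾(x) = ± n^(2/(p-1)) z(nx - ⌊nx⌋)`, the sign depending on the parity of `⌊nx⌋`. -/
noncomputable def zNat (p : ℝ) (z : ℝ → ℝ) (n : ℕ) (x : ℝ) : ℝ :=
  if Even ⌊(n : ℝ) * x⌋ then (n : ℝ) ^ (2 / (p - 1)) * z (Int.fract ((n : ℝ) * x))
  else -((n : ℝ) ^ (2 / (p - 1)) * z (Int.fract ((n : ℝ) * x)))

/-- The family `z⁽ⁿ⁾` for `n : ℤ`, with `z⁽⁻ⁿ⁾ := -z⁽ⁿ⁾` and `z⁽⁰⁾ := 0`. -/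
noncomputable def zInt (p : ℝ) (z : ℝ → ℝ) (n : ℤ) (x : ℝ) : ℝ :=
  if 0 ≤ n then zNat p z n.toNat x else -(zNat p z (-n).toNat x)

lemma cd2_facts {w : ℝ → ℝ} (hw : ContDiff ℝ 2 w) :
    Differentiable ℝ w ∧ Differentiable ℝ (deriv w) ∧ Continuous (deriv (deriv w)) := by
  have h2 : (2 : WithTop ℕ∞) = 1 + 1 := by norm_num
  rw [h2, contDiff_succ_iff_deriv] at hw
  obtain ⟨hd, -, hw1⟩ := hw
  rw [contDiff_one_iff_deriv] at hw1
  exact ⟨hd, hw1.1, hw1.2⟩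

lemma sq_rpow_half (u r : ℝ) : ((u^2 : ℝ)) ^ r = |u| ^ (2 * r) := by
  rw [← sq_abs, ← Real.rpow_natCast |u| 2, ← Real.rpow_mul (abs_nonneg u)]
  norm_num

lemma continuous_abs_rpow {q : ℝ} (hq : 0 < q) : Continuous (fun u : ℝ => |u| ^ q) := by
  have : (fun u : ℝ => |u| ^ q) = fun u : ℝ => (u ^ 2) ^ (q/2) := by
    funext u; rw [sq_rpow_half]; ring_nf
  rw [this]
  exact (Real.continuous_rpow_const (by linarith)).comp (continuous_pow 2)

lemma hasDerivAt_abs_rpow' {p : ℝ} (hp : 1 < p) (u : ℝ) :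
    HasDerivAt (fun v : ℝ => |v| ^ (p+1)) ((p+1) * (u * |u| ^ (p-1))) u := by
  have h1 : HasDerivAt (fun v : ℝ => v ^ 2) (2 * u) u := by
    simpa using (hasDerivAt_pow 2 u)
  have h3 : HasDerivAt (fun v : ℝ => (v^2) ^ ((p+1)/2))
      ((2 * u) * ((p+1)/2) * (u^2) ^ ((p+1)/2 - 1)) u :=
    h1.rpow_const (p := (p+1)/2) (Or.inr (by linarith))
  have he : (fun v : ℝ => |v| ^ (p+1)) = (fun v : ℝ => (v^2) ^ ((p+1)/2)) := by
    funext v; rw [sq_rpow_half]; ring_nf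
  rw [he]
  convert h3 using 1
  have : (p+1)/2 - 1 = (p-1)/2 := by ring
  rw [this, sq_rpow_half]
  ring_nf

lemma hasDerivAt_affine {u : ℝ → ℝ} (hu : Differentiable ℝ u) (c m d x : ℝ) :
    HasDerivAt (fun y => c * u (m * y + d)) (c * m * deriv u (m * x + d)) x := by
  have h0 : HasDerivAt (fun y : ℝ => m * y + d) m x := by
    simpa using ((hasDerivAt_id x).const_mul m).add_const d
  have h1 := ((hu (m * x + d)).hasDerivAt.comp x h0).const_mul c
  refine h1.congr_deriv ?_; ring

lemma deriv_affine {u : ℝ → ℝ} (hu : Differentiable ℝ u) (c m d : ℝ) :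
    deriv (fun y => c * u (m * y + d)) = fun x => c * m * deriv u (m * x + d) :=
  funext fun x => (hasDerivAt_affine hu c m d x).deriv

lemma energy_hasDerivAt {p : ℝ} (hp : 1 < p) {w : ℝ → ℝ} (hw : ContDiff ℝ 2 w) (x : ℝ) :
    HasDerivAt (fun y => (deriv w y)^2/2 + |w y|^(p+1)/(p+1))
      (deriv w x * (deriv (deriv w) x + w x * |w x|^(p-1))) x := by
  obtain ⟨hd, hd1, -⟩ := cd2_facts hw
  have h1 : HasDerivAt (fun y => (deriv w y)^2/2)
      (deriv w x * deriv (deriv w) x) x := by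
    have h := ((hd1 x).hasDerivAt.pow 2).div_const 2
    refine h.congr_deriv ?_; push_cast; ring
  have h2 : HasDerivAt (fun y => |w y|^(p+1)/(p+1))
      (w x * |w x|^(p-1) * deriv w x) x := by
    have h := ((hasDerivAt_abs_rpow' hp (w x)).comp x (hd x).hasDerivAt).div_const (p+1)
    refine h.congr_deriv ?_
    have hp1 : p + 1 ≠ 0 := by linarith
    field_simp
  refine (h1.add h2).congr_deriv ?_; ring

lemma energy_const {p : ℝ} (hp : 1 < p) {w : ℝ → ℝ} (hw : ContDiff ℝ 2 w)
    (hode : ∀ x ∈ Icc (0:ℝ) 1, deriv (deriv w) x + w x * |w x| ^ (p - 1) = 0) :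
    ∀ x ∈ Icc (0:ℝ) 1, (deriv w x)^2/2 + |w x|^(p+1)/(p+1)
      = (deriv w 0)^2/2 + |w 0|^(p+1)/(p+1) := by
  apply constant_of_has_deriv_right_zero
  · apply Continuous.continuousOn
    obtain ⟨hd, hd1, -⟩ := cd2_facts hw
    exact (((hd1.continuous.pow 2).div_const 2).add
      (((continuous_abs_rpow (by linarith : (0:ℝ) < p + 1)).comp hd.continuous).div_const (p+1)))
  · intro x hx
    have h := energy_hasDerivAt hp hw x
    rw [hode x (Ico_subset_Icc_self hx), mul_zero] at h
    exact h.hasDerivWithinAt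

lemma rpow_beta {p l : ℝ} (hp : 1 < p) (hl : 0 < l) :
    (l ^ (2/(p-1))) ^ (p-1) = l ^ (2:ℕ) := by
  rw [← Real.rpow_mul hl.le, ← Real.rpow_natCast l 2]
  have hne : p - 1 ≠ 0 := by linarith
  rw [div_mul_cancel₀ _ hne]
  norm_num

lemma abs_mul_rpow {σ c u q : ℝ} (hσ : σ = 1 ∨ σ = -1) (hc : 0 ≤ c) :
    |σ * c * u| ^ q = c ^ q * |u| ^ q := by
  have : |σ * c * u| = c * |u| := by
    rcases hσ with h | h <;> rw [h] <;> simp [abs_mul, abs_of_nonneg hc]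
  rw [this, Real.mul_rpow hc (abs_nonneg u)]

lemma scaled_ode {p : ℝ} (hp : 1 < p) {w : ℝ → ℝ} (hw : ContDiff ℝ 2 w)
    (hode : ∀ x ∈ Icc (0:ℝ) 1, deriv (deriv w) x + w x * |w x| ^ (p-1) = 0)
    {σ a l : ℝ} (hσ : σ = 1 ∨ σ = -1) (hl : 0 < l) (ha : 0 ≤ a) (hab : a + l ≤ 1) :
    ∀ t ∈ Icc (0:ℝ) 1,
      deriv (deriv (fun s => σ * l ^ (2/(p-1)) * w (l * s + a))) t
        + (σ * l ^ (2/(p-1)) * w (l * t + a)) * |σ * l ^ (2/(p-1)) * w (l * t + a)| ^ (p-1) = 0 := by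
  intro t ht
  obtain ⟨hd, hd1, -⟩ := cd2_facts hw
  set c := σ * l ^ (2/(p-1)) with hc
  have hx : l * t + a ∈ Icc (0:ℝ) 1 := by
    constructor
    · nlinarith [ht.1, ht.2]
    · nlinarith [ht.1, ht.2]
  have hdd : deriv (deriv (fun s => c * w (l * s + a))) t
      = c * l * l * deriv (deriv w) (l * t + a) := by
    rw [deriv_affine hd c l a]
    have := (hasDerivAt_affine hd1 (c * l) l a t).deriv
    rw [this]
  rw [hdd]
  have hode' := hode _ hx
  have hww : deriv (deriv w) (l * t + a) = -(w (l*t+a) * |w (l*t+a)| ^ (p-1)) := by linarith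
  rw [hww, hc, abs_mul_rpow hσ (Real.rpow_nonneg hl.le _), rpow_beta hp hl]
  ring

lemma deriv_eqOn_open {f g : ℝ → ℝ} {U : Set ℝ} (hU : IsOpen U) (h : EqOn f g U)
    {x : ℝ} (hx : x ∈ U) : deriv f x = deriv g x :=
  Filter.EventuallyEq.deriv_eq (Filter.eventuallyEq_of_mem (hU.mem_nhds hx) h)

lemma deriv2_eqOn_open {f g : ℝ → ℝ} {U : Set ℝ} (hU : IsOpen U) (h : EqOn f g U)
    {x : ℝ} (hx : x ∈ U) : deriv (deriv f) x = deriv (deriv g) x :=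
  deriv_eqOn_open hU (fun _ hy => deriv_eqOn_open hU h hy) hx

lemma deriv2_affine {u : ℝ → ℝ} (hu : Differentiable ℝ u) (hu1 : Differentiable ℝ (deriv u))
    (c m d x : ℝ) :
    deriv (deriv (fun y => c * u (m * y + d))) x = c * m * m * deriv (deriv u) (m * x + d) := by
  rw [deriv_affine hu c m d]
  rw [(hasDerivAt_affine hu1 (c * m) m d x).deriv]

lemma zNat_zero_left (p : ℝ) (hp : 1 < p) (z : ℝ → ℝ) (x : ℝ) : zNat p z 0 x = 0 := by
  unfold zNat
  have : ((0:ℕ):ℝ) = 0 := by norm_num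
  rw [this]
  rw [Real.zero_rpow (div_ne_zero two_ne_zero (by linarith))]
  simp

lemma zNat_bc0 (p : ℝ) (z : ℝ → ℝ) (hz0 : z 0 = 0) (k : ℕ) : zNat p z k 0 = 0 := by
  unfold zNat; simp [hz0]

lemma zNat_bc1 (p : ℝ) (z : ℝ → ℝ) (hz0 : z 0 = 0) (k : ℕ) : zNat p z k 1 = 0 := by
  unfold zNat
  rw [mul_one]
  rw [show ((k:ℝ)) = ((k:ℤ):ℝ) by push_cast; ring]
  rw [Int.fract_intCast, hz0]
  simp

lemma zNat_eq_on {p : ℝ} {z : ℝ → ℝ} {k j : ℕ} (hk : 0 < k) (hj : j < k) :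
    ∀ y ∈ Ioo ((j:ℝ)/k) (((j:ℝ)+1)/k),
      zNat p z k y = ((-1:ℝ)^j * (k:ℝ) ^ (2/(p-1))) * z ((k:ℝ) * y + (-(j:ℝ))) := by
  intro y hy
  have hk' : (0:ℝ) < (k:ℝ) := by exact_mod_cast hk
  have h1 : (j:ℝ) < (k:ℝ) * y := by
    have := hy.1; rw [div_lt_iff₀ hk'] at this; linarith
  have h2 : (k:ℝ) * y < (j:ℝ) + 1 := by
    have := hy.2; rw [lt_div_iff₀ hk'] at this; linarith
  have hfl : ⌊(k:ℝ) * y⌋ = (j:ℤ) := by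
    rw [Int.floor_eq_iff]
    constructor <;> push_cast <;> linarith
  have hfr : Int.fract ((k:ℝ) * y) = (k:ℝ) * y + (-(j:ℝ)) := by
    rw [Int.fract, hfl]; push_cast; ring
  unfold zNat
  rw [hfl, hfr]
  rcases Nat.even_or_odd j with he | ho
  · rw [if_pos ((Int.even_coe_nat j).mpr he)]
    rw [he.neg_one_pow]; ring
  · rw [if_neg (by simpa [Int.even_coe_nat] using (Nat.not_even_iff_odd.mpr ho))]
    rw [ho.neg_one_pow]; ring

lemma eq_zero_on_Icc_of_Ioos {G : ℝ → ℝ} (hG : Continuous G) {k : ℕ} (hk : 0 < k)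
    (h : ∀ j, j < k → ∀ x ∈ Ioo ((j:ℝ)/k) (((j:ℝ)+1)/k), G x = 0) :
    ∀ x ∈ Icc (0:ℝ) 1, G x = 0 := by
  have hk' : (0:ℝ) < (k:ℝ) := by exact_mod_cast hk
  have hIcc : ∀ j, j < k → ∀ x ∈ Icc ((j:ℝ)/k) (((j:ℝ)+1)/k), G x = 0 := by
    intro j hj x hx
    have hlt : (j:ℝ)/k < ((j:ℝ)+1)/k := by
      apply div_lt_div_of_pos_right (by linarith) hk'
    have hcl : closure (Ioo ((j:ℝ)/k) (((j:ℝ)+1)/k)) = Icc ((j:ℝ)/k) (((j:ℝ)+1)/k) :=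
      closure_Ioo (ne_of_lt hlt)
    have h2 := Set.EqOn.closure (fun y hy => h j hj y hy) hG continuous_const
    rw [hcl] at h2
    exact h2 hx
  intro x hx
  rcases eq_or_lt_of_le hx.2 with h1 | h1
  · refine hIcc (k-1) (Nat.sub_lt hk one_pos) x ?_
    have hc : ((k-1:ℕ):ℝ) = (k:ℝ) - 1 := by
      rw [Nat.cast_sub hk]; norm_num
    rw [hc, h1]
    constructor
    · rw [div_le_one hk']; linarith
    · rw [le_div_iff₀ hk']; linarith
  · set jz : ℤ := ⌊(k:ℝ) * x⌋ with hjz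
    have hjz0 : 0 ≤ jz := Int.floor_nonneg.mpr (mul_nonneg hk'.le hx.1)
    have hjlt : jz < (k:ℤ) := by
      apply Int.floor_lt.mpr
      push_cast
      nlinarith [hx.1]
    set j : ℕ := jz.toNat with hj
    have hjc : ((j:ℕ):ℝ) = (jz:ℝ) := by
      rw [hj]; exact_mod_cast congrArg (Int.cast : ℤ → ℝ) (Int.toNat_of_nonneg hjz0)
    refine hIcc j (by omega) x ?_
    have hfl := Int.floor_le ((k:ℝ) * x)
    have hfl2 := Int.lt_floor_add_one ((k:ℝ) * x)
    rw [hjc]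
    constructor
    · rw [div_le_iff₀ hk']; rw [← hjz] at hfl; linarith [hfl]
    · rw [le_div_iff₀ hk']; rw [← hjz] at hfl2; linarith [hfl2]

lemma zNat_ode {p : ℝ} (hp : 1 < p) {z : ℝ → ℝ} (hz : ContDiff ℝ 2 z)
    (hz_eq : ∀ x ∈ Icc (0:ℝ) 1, deriv (deriv z) x + z x * |z x| ^ (p - 1) = 0)
    {k : ℕ} (hk : 0 < k) {ε : ℝ} (hε : ε = 1 ∨ ε = -1)
    {w : ℝ → ℝ} (hw : ContDiff ℝ 2 w)
    (hwz : ∀ x ∈ Icc (0:ℝ) 1, w x = ε * zNat p z k x) :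
    ∀ x ∈ Icc (0:ℝ) 1, deriv (deriv w) x + w x * |w x| ^ (p - 1) = 0 := by
  obtain ⟨hwd, hwd1, hwd2⟩ := cd2_facts hw
  obtain ⟨hzd, hzd1, -⟩ := cd2_facts hz
  have hk' : (0:ℝ) < (k:ℝ) := by exact_mod_cast hk
  have hG : Continuous (fun x => deriv (deriv w) x + w x * |w x| ^ (p-1)) := by
    exact hwd2.add (hw.continuous.mul
      ((continuous_abs_rpow (by linarith : (0:ℝ) < p - 1)).comp hw.continuous))
  apply eq_zero_on_Icc_of_Ioos hG hk
  intro j hj x hx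
  set c : ℝ := (k:ℝ) ^ (2/(p-1)) with hcdef
  have hc0 : 0 ≤ c := Real.rpow_nonneg hk'.le _
  set σ : ℝ := ε * (-1)^j with hσdef
  have hσ : σ = 1 ∨ σ = -1 := by
    rw [hσdef]
    rcases Nat.even_or_odd j with he2 | ho2
    · rw [he2.neg_one_pow, mul_one]; exact hε
    · rw [ho2.neg_one_pow]; rcases hε with h | h <;> rw [h] <;> norm_num
  have hsub : Ioo ((j:ℝ)/k) (((j:ℝ)+1)/k) ⊆ Icc (0:ℝ) 1 := by
    intro y hy
    constructor
    · have : (0:ℝ) ≤ (j:ℝ)/k := by positivity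
      linarith [hy.1]
    · have hj1 : ((j:ℝ)+1)/k ≤ 1 := by
        rw [div_le_one hk']
        have : (j:ℝ) + 1 ≤ (k:ℝ) := by exact_mod_cast hj
        linarith
      linarith [hy.2]
  have heq : EqOn w (fun y => (σ * c) * z ((k:ℝ) * y + (-(j:ℝ)))) (Ioo ((j:ℝ)/k) (((j:ℝ)+1)/k)) := by
    intro y hy
    rw [hwz y (hsub hy), zNat_eq_on hk hj y hy]
    simp only [hσdef]
    ring
  have hdd := deriv2_eqOn_open isOpen_Ioo heq hx
  rw [hdd, deriv2_affine hzd hzd1 (σ * c) (k:ℝ) (-(j:ℝ)) x, heq hx]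
  have ht : (k:ℝ) * x + (-(j:ℝ)) ∈ Icc (0:ℝ) 1 := by
    have h1 := hx.1; have h2 := hx.2
    rw [div_lt_iff₀ hk'] at h1
    rw [lt_div_iff₀ hk'] at h2
    constructor <;> linarith
  set t := (k:ℝ) * x + (-(j:ℝ))
  have hode := hz_eq t ht
  have hzz : deriv (deriv z) t = -(z t * |z t| ^ (p-1)) := by linarith
  rw [hzz, abs_mul_rpow hσ hc0, hcdef, rpow_beta hp hk']
  ring

lemma zero_ode {p : ℝ} {w : ℝ → ℝ} (hp : 1 < p) (hw : ContDiff ℝ 2 w)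
    (h : ∀ x ∈ Icc (0:ℝ) 1, w x = 0) :
    ∀ x ∈ Icc (0:ℝ) 1, deriv (deriv w) x + w x * |w x| ^ (p - 1) = 0 := by
  obtain ⟨-, -, hwd2⟩ := cd2_facts hw
  have hG : Continuous (fun x => deriv (deriv w) x + w x * |w x| ^ (p-1)) :=
    hwd2.add (hw.continuous.mul
      ((continuous_abs_rpow (by linarith : (0:ℝ) < p - 1)).comp hw.continuous))
  apply eq_zero_on_Icc_of_Ioos hG one_pos
  intro j hj x hx
  have hj0 : j = 0 := Nat.lt_one_iff.mp hj
  subst hj0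
  norm_num at hx
  have heq : EqOn w (fun _ => (0:ℝ)) (Ioo (0:ℝ) 1) := fun y hy =>
    h y ⟨hy.1.le, hy.2.le⟩
  rw [deriv2_eqOn_open isOpen_Ioo heq hx, h x ⟨hx.1.le, hx.2.le⟩]
  simp

lemma backward_full {p : ℝ} (hp : 1 < p) {z : ℝ → ℝ} (hz : ContDiff ℝ 2 z)
    (hz_eq : ∀ x ∈ Icc (0:ℝ) 1, deriv (deriv z) x + z x * |z x| ^ (p - 1) = 0)
    (hz0 : z 0 = 0) (n : ℤ) {w : ℝ → ℝ} (hw : ContDiff ℝ 2 w)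
    (hwz : ∀ x ∈ Icc (0:ℝ) 1, w x = zInt p z n x) :
    (∀ x ∈ Icc (0:ℝ) 1, deriv (deriv w) x + w x * |w x| ^ (p - 1) = 0) ∧
      w 0 = 0 ∧ w 1 = 0 := by
  have h0m : (0:ℝ) ∈ Icc (0:ℝ) 1 := ⟨le_refl 0, zero_le_one⟩
  have h1m : (1:ℝ) ∈ Icc (0:ℝ) 1 := ⟨zero_le_one, le_refl 1⟩
  rcases lt_trichotomy n 0 with hn | hn | hn
  · have hk : 0 < (-n).toNat := by omega
    have hzin : ∀ x, zInt p z n x = -1 * zNat p z (-n).toNat x := by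
      intro x; unfold zInt; rw [if_neg (by omega)]; ring
    have hwz' : ∀ x ∈ Icc (0:ℝ) 1, w x = -1 * zNat p z (-n).toNat x := by
      intro x hx; rw [hwz x hx, hzin]
    refine ⟨zNat_ode hp hz hz_eq hk (Or.inr rfl) hw hwz', ?_, ?_⟩
    · rw [hwz' 0 h0m, zNat_bc0 p z hz0]; ring
    · rw [hwz' 1 h1m, zNat_bc1 p z hz0]; ring
  · subst hn
    have hwz' : ∀ x ∈ Icc (0:ℝ) 1, w x = 0 := by
      intro x hx
      rw [hwz x hx]
      unfold zInt
      rw [if_pos (le_refl 0)]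
      exact zNat_zero_left p hp z x
    exact ⟨zero_ode hp hw hwz', hwz' 0 h0m, hwz' 1 h1m⟩
  · have hk : 0 < n.toNat := by omega
    have hwz' : ∀ x ∈ Icc (0:ℝ) 1, w x = 1 * zNat p z n.toNat x := by
      intro x hx; rw [hwz x hx]; unfold zInt; rw [if_pos (by omega)]; ring
    refine ⟨zNat_ode hp hz hz_eq hk (Or.inl rfl) hw hwz', ?_, ?_⟩
    · rw [hwz' 0 h0m, zNat_bc0 p z hz0]; ring
    · rw [hwz' 1 h1m, zNat_bc1 p z hz0]; ring

lemma deriv_limit_within {f g : ℝ → ℝ} {l : Filter ℝ} [l.NeBot] {a L : ℝ}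
    (hf : Continuous (deriv f)) (hl : l ≤ nhds a) (hfg : deriv f =ᶠ[l] g)
    (hg : Filter.Tendsto g l (nhds L)) : deriv f a = L :=
  tendsto_nhds_unique (((hf.tendsto a).mono_left hl).congr' hfg) hg

lemma rpow_sq {l a : ℝ} (hl : 0 < l) : (l ^ a) ^ (2:ℕ) = l ^ (2*a) := by
  rw [← Real.rpow_natCast (l ^ a) 2, ← Real.rpow_mul hl.le]
  norm_num
  ring_nf

lemma energy_scale {p l : ℝ} (hp : 1 < p) (hl : 0 < l) {σ : ℝ} (A B : ℝ)
    (hσ : σ = 1 ∨ σ = -1) :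
    (σ * l ^ (-(2/(p-1))) * (1/l) * A)^2/2 + |σ * l ^ (-(2/(p-1))) * B| ^ (p+1)/(p+1)
      = l ^ (-(2*(2/(p-1))+2)) * (A^2/2 + |B| ^ (p+1)/(p+1)) := by
  have hne : p - 1 ≠ 0 := by linarith
  have hp1 : (0:ℝ) < p + 1 := by linarith
  have hσ2 : σ^2 = 1 := by rcases hσ with h | h <;> rw [h] <;> norm_num
  have h1 : (σ * l ^ (-(2/(p-1))) * (1/l) * A)^2
      = l ^ (-(2*(2/(p-1))+2)) * A^2 := by
    have e1 : (σ * l ^ (-(2/(p-1))) * (1/l) * A)^2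
        = σ^2 * ((l ^ (-(2/(p-1))))^(2:ℕ) * (l^(-1:ℝ))^(2:ℕ)) * A^2 := by
      rw [Real.rpow_neg_one]; field_simp
    rw [e1, hσ2, rpow_sq hl, rpow_sq hl, ← Real.rpow_add hl]
    ring_nf
  have h2 : |σ * l ^ (-(2/(p-1))) * B| ^ (p+1)
      = l ^ (-(2*(2/(p-1))+2)) * |B| ^ (p+1) := by
    rw [abs_mul_rpow hσ (Real.rpow_nonneg hl.le _), ← Real.rpow_mul hl.le]
    congr 2
    field_simp
    ring
  rw [h1, h2]
  ring

lemma cd2_affine {w : ℝ → ℝ} (hw : ContDiff ℝ 2 w) (c m d : ℝ) :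
    ContDiff ℝ 2 (fun t => c * w (m * t + d)) :=
  contDiff_const.mul (hw.comp ((contDiff_const.mul contDiff_id).add contDiff_const))

set_option maxHeartbeats 2000000 in
lemma nodal_step {p : ℝ} (hp : 1 < p) {z w : ℝ → ℝ}
    (hz : ContDiff ℝ 2 z)
    (hz_unique : ∀ u : ℝ → ℝ, ContDiff ℝ 2 u →
      (∀ x ∈ Icc (0:ℝ) 1, deriv (deriv u) x + u x * |u x| ^ (p - 1) = 0) →
      u 0 = 0 → u 1 = 0 → (∀ x ∈ Icc (0:ℝ) 1, 0 ≤ u x) →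
      (∃ x ∈ Icc (0:ℝ) 1, u x ≠ 0) →
      ∀ x ∈ Icc (0:ℝ) 1, u x = z x)
    (hz0pos : 0 < deriv z 0) (hz10 : deriv z 1 = -deriv z 0)
    {Ez : ℝ} (hEz : ∀ x ∈ Icc (0:ℝ) 1, (deriv z x)^2/2 + |z x| ^ (p+1)/(p+1) = Ez)
    (hw : ContDiff ℝ 2 w)
    (hode : ∀ x ∈ Icc (0:ℝ) 1, deriv (deriv w) x + w x * |w x| ^ (p-1) = 0)
    (hw1 : w 1 = 0)
    {E : ℝ} (hE : ∀ x ∈ Icc (0:ℝ) 1, (deriv w x)^2/2 + |w x| ^ (p+1)/(p+1) = E)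
    (hEpos : 0 < E)
    {a : ℝ} (ha0 : 0 ≤ a) (ha1 : a < 1) (hwa : w a = 0)
    {σ : ℝ} (hσ : σ = 1 ∨ σ = -1) (hsgn : 0 < σ * deriv w a) :
    ∃ l, 0 < l ∧ a + l ≤ 1 ∧ w (a + l) = 0 ∧ l ^ (-(2*(2/(p-1))+2)) * Ez = E
      ∧ (∀ t ∈ Icc (0:ℝ) 1, w (l * t + a) = σ * l ^ (-(2/(p-1))) * z t)
      ∧ 0 < (-σ) * deriv w (a + l) := by
  obtain ⟨hwd, hwd1, hwd2⟩ := cd2_facts hw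
  obtain ⟨hzd, hzd1, -⟩ := cd2_facts hz
  have hzd1c : Continuous (deriv z) := hzd1.continuous
  have hwd1c : Continuous (deriv w) := hwd1.continuous
  have hne : p - 1 ≠ 0 := by linarith
  have hp10 : p + 1 ≠ 0 := by linarith
  -- derivative at a is nonzero
  have habs0 : |(0:ℝ)| ^ (p+1) = 0 := by
    rw [abs_zero, Real.zero_rpow hp10]
  have hEa : (deriv w a)^2/2 = E := by
    have h := hE a ⟨ha0, ha1.le⟩
    rw [hwa, habs0] at h
    rw [← h]; ring_nf
  have hda : deriv w a ≠ 0 := by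
    intro h
    rw [h] at hEa
    norm_num at hEa
    linarith
  -- isolation of the zero a
  have hop : IsOpen {x : ℝ | deriv w x ≠ 0} := isOpen_ne_fun hwd1c continuous_const
  obtain ⟨δ, hδ0, hδ⟩ := Metric.isOpen_iff.mp hop a hda
  set ε : ℝ := min (δ/2) (1 - a) with hεdef
  have hε0 : 0 < ε := lt_min (by linarith) (by linarith)
  have hεδ : ε < δ := lt_of_le_of_lt (min_le_left _ _) (by linarith)
  have hε1 : a + ε ≤ 1 := by
    have := min_le_right (δ/2) (1 - a); simp only [← hεdef] at this; linarith
  have hiso : ∀ x ∈ Ioc a (a + ε), w x ≠ 0 := by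
    intro x hx hwx
    obtain ⟨c, hc, hc0⟩ := exists_deriv_eq_zero hx.1 hw.continuous.continuousOn
      (by rw [hwa, hwx])
    have : c ∈ Metric.ball a δ := by
      rw [Real.ball_eq_Ioo]
      constructor
      · linarith [hc.1]
      · have := hc.2; have := hx.2; linarith
    exact hδ this hc0
  -- next zero b
  set S : Set ℝ := Icc (a + ε) 1 ∩ {x | w x = 0} with hSdef
  have hScl : IsClosed S := isClosed_Icc.inter (isClosed_eq hw.continuous continuous_const)
  have hSne : S.Nonempty := ⟨1, ⟨hε1, le_refl 1⟩, hw1⟩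
  have hSbdd : BddBelow S := ⟨a + ε, fun x hx => hx.1.1⟩
  set b : ℝ := sInf S with hbdef
  have hbS : b ∈ S := hScl.csInf_mem hSne hSbdd
  have hab : a < b := by have := hbS.1.1; linarith
  have hb1 : b ≤ 1 := hbS.1.2
  have hwb : w b = 0 := hbS.2
  have hnz : ∀ x ∈ Ioo a b, w x ≠ 0 := by
    intro x hx hwx
    rcases le_or_gt x (a + ε) with h | h
    · exact hiso x ⟨hx.1, h⟩ hwx
    · have hxS : x ∈ S := ⟨⟨h.le, by linarith [hx.2]⟩, hwx⟩
      have := csInf_le hSbdd hxS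
      linarith [hx.2]
  set l : ℝ := b - a with hldef
  have hl : 0 < l := by simp only [hldef]; linarith
  have hal : a + l ≤ 1 := by simp only [hldef]; linarith
  -- sign on the nodal interval
  set xm : ℝ := a + l/2 with hxmdef
  have hxm : xm ∈ Ioo a b := by
    constructor <;> simp only [hxmdef, hldef] <;> linarith
  have hwxm : w xm ≠ 0 := hnz xm hxm
  set τ : ℝ := if 0 < w xm then (1:ℝ) else -1 with hτdef
  have hτ : τ = 1 ∨ τ = -1 := by
    rcases lt_or_ge 0 (w xm) with h | h
    · left; simp [hτdef, h]
    · right; simp [hτdef, not_lt.mpr h]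
  have hτm : 0 < τ * w xm := by
    rcases lt_or_ge 0 (w xm) with h | h
    · simp only [hτdef, if_pos h]; linarith
    · have hlt : w xm < 0 := lt_of_le_of_ne h hwxm
      simp only [hτdef, if_neg (not_lt.mpr h)]; nlinarith
  have hsgn_all : ∀ x ∈ Ioo a b, 0 < τ * w x := by
    intro x hx
    by_contra hcon
    push_neg at hcon
    have hxne : τ * w x ≠ 0 := by
      rcases hτ with h | h <;> rw [h] <;> simp [hnz x hx]
    have hxlt : τ * w x < 0 := lt_of_le_of_ne hcon hxne
    have hmem : (0:ℝ) ∈ uIcc (w x) (w xm) := by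
      rcases hτ with h | h <;> rw [h] at hxlt hτm <;> rw [Set.mem_uIcc]
      · left; constructor <;> linarith
      · right; constructor <;> linarith
    obtain ⟨y, hy, hwy⟩ := intermediate_value_uIcc hw.continuous.continuousOn hmem
    have hysub : uIcc x xm ⊆ Ioo a b := by
      intro u hu
      rw [Set.mem_uIcc] at hu
      rcases hu with ⟨h1, h2⟩ | ⟨h1, h2⟩ <;>
        exact ⟨by linarith [hx.1, hxm.1], by linarith [hx.2, hxm.2]⟩
    exact hnz y (hysub hy) hwy
  -- the rescaled function
  have hτode := scaled_ode hp hw hode hτ hl ha0 hal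
  set v : ℝ → ℝ := fun s => τ * l ^ (2/(p-1)) * w (l * s + a) with hvdef
  have hlb : (0:ℝ) < l ^ (2/(p-1)) := Real.rpow_pos_of_pos hl _
  have hv2 : ContDiff ℝ 2 v := cd2_affine hw (τ * l ^ (2/(p-1))) l a
  have hv0 : v 0 = 0 := by
    show τ * l ^ (2/(p-1)) * w (l * 0 + a) = 0
    rw [mul_zero, zero_add, hwa, mul_zero]
  have hv1 : v 1 = 0 := by
    show τ * l ^ (2/(p-1)) * w (l * 1 + a) = 0
    have hba : l * 1 + a = b := by rw [hldef]; ring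
    rw [hba, hwb, mul_zero]
  have hvnn : ∀ t ∈ Icc (0:ℝ) 1, 0 ≤ v t := by
    intro t ht
    rcases eq_or_lt_of_le ht.1 with h0 | h0
    · rw [← h0, hv0]
    rcases eq_or_lt_of_le ht.2 with h1 | h1
    · rw [h1, hv1]
    have hmem : l * t + a ∈ Ioo a b := by
      constructor
      · nlinarith
      · have : l * t < l := by nlinarith
        simp only [hldef] at this ⊢
        linarith
    have := hsgn_all _ hmem
    show 0 ≤ τ * l ^ (2/(p-1)) * w (l * t + a)
    nlinarith
  have hvhalf : l * (1/2) + a = xm := by rw [hxmdef]; ring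
  have hvne : ∃ t ∈ Icc (0:ℝ) 1, v t ≠ 0 := by
    refine ⟨1/2, ⟨by norm_num, by norm_num⟩, ?_⟩
    show τ * l ^ (2/(p-1)) * w (l * (1/2) + a) ≠ 0
    rw [hvhalf]
    intro hq
    nlinarith
  have huniq := hz_unique v hv2 hτode hv0 hv1 hvnn hvne
  have hinv : l ^ (-(2/(p-1))) * l ^ (2/(p-1)) = 1 := by
    rw [← Real.rpow_add hl]; norm_num
  have hττ : τ * τ = 1 := by rcases hτ with h | h <;> rw [h] <;> norm_num
  have hform : ∀ t ∈ Icc (0:ℝ) 1, w (l * t + a) = τ * l ^ (-(2/(p-1))) * z t := by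
    intro t ht
    have h : τ * l ^ (2/(p-1)) * w (l * t + a) = z t := huniq t ht
    have h2 : τ * l ^ (-(2/(p-1))) * (τ * l ^ (2/(p-1)) * w (l * t + a))
        = τ * l ^ (-(2/(p-1))) * z t := by rw [h]
    calc w (l * t + a) = (τ*τ) * (l ^ (-(2/(p-1))) * l ^ (2/(p-1))) * w (l * t + a) := by
            rw [hττ, hinv]; ring
      _ = τ * l ^ (-(2/(p-1))) * (τ * l ^ (2/(p-1)) * w (l * t + a)) := by ring
      _ = τ * l ^ (-(2/(p-1))) * z t := h2
  set C : ℝ := τ * l ^ (-(2/(p-1))) with hCdef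
  have heqw : EqOn w (fun y => C * z ((1/l) * y + (-(a/l)))) (Ioo a b) := by
    intro y hy
    have hty : (1/l) * y + (-(a/l)) ∈ Icc (0:ℝ) 1 := by
      constructor
      · have := hy.1
        have h9 : 0 ≤ (y - a)/l := by
          apply div_nonneg _ hl.le
          linarith
        calc (0:ℝ) ≤ (y-a)/l := h9
          _ = (1/l)*y + (-(a/l)) := by ring
      · have hyb := hy.2
        have h9 : (y - a)/l ≤ 1 := by
          rw [div_le_one hl]; simp only [hldef]; linarith
        calc (1/l)*y + (-(a/l)) = (y-a)/l := by ring
          _ ≤ 1 := h9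
    have hrec : l * ((1/l) * y + (-(a/l))) + a = y := by field_simp; ring
    have h := hform _ hty
    rw [hrec] at h
    exact h
  have hderIoo : ∀ x ∈ Ioo a b, deriv w x = C * (1/l) * deriv z ((1/l) * x + (-(a/l))) := by
    intro x hx
    rw [deriv_eqOn_open isOpen_Ioo heqw hx,
      (hasDerivAt_affine hzd C (1/l) (-(a/l)) x).deriv]
  -- energy identity at the midpoint
  have htm : (1/l) * xm + (-(a/l)) = 1/2 := by
    rw [hxmdef]; field_simp; ring
  have hxmIcc : xm ∈ Icc (0:ℝ) 1 := by
    constructor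
    · have := hxm.1; linarith
    · have := hxm.2; linarith
  have hhalfIcc : (1/2 : ℝ) ∈ Icc (0:ℝ) 1 := by norm_num
  have hwxm2 : w xm = C * z (1/2) := by
    have := hform (1/2) hhalfIcc
    rw [hvhalf] at this
    exact this
  have hEl : l ^ (-(2*(2/(p-1))+2)) * Ez = E := by
    have hexm := hE xm hxmIcc
    rw [hderIoo xm hxm, htm, hwxm2, hCdef] at hexm
    rw [energy_scale hp hl (deriv z (1/2)) (z (1/2)) hτ] at hexm
    rw [hEz (1/2) hhalfIcc] at hexm
    exact hexm
  -- one-sided derivative identification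
  have hcont2 : Continuous (fun x => C * (1/l) * deriv z ((1/l) * x + (-(a/l)))) :=
    continuous_const.mul (hzd1c.comp ((continuous_const.mul continuous_id).add continuous_const))
  have hdera : deriv w a = C * (1/l) * deriv z 0 := by
    apply deriv_limit_within (l := nhdsWithin a (Ioi a)) hwd1c nhdsWithin_le_nhds
    · exact Filter.eventuallyEq_of_mem (Ioo_mem_nhdsGT_of_mem ⟨le_refl a, hab⟩)
        (fun x hx => hderIoo x hx)
    · have hval : (1/l) * a + (-(a/l)) = 0 := by field_simp; ring
      have := (hcont2.tendsto a).mono_left (nhdsWithin_le_nhds (s := Ioi a))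
      rw [hval] at this
      exact this
  have hderb : deriv w b = C * (1/l) * deriv z 1 := by
    apply deriv_limit_within (l := nhdsWithin b (Iio b)) hwd1c nhdsWithin_le_nhds
    · exact Filter.eventuallyEq_of_mem (Ioo_mem_nhdsLT_of_mem ⟨hab, le_refl b⟩)
        (fun x hx => hderIoo x hx)
    · have hval : (1/l) * b + (-(a/l)) = 1 := by
        field_simp
        simp only [hldef]; ring
      have := (hcont2.tendsto b).mono_left (nhdsWithin_le_nhds (s := Iio b))
      rw [hval] at this
      exact this
  have hCpos : 0 < l ^ (-(2/(p-1))) * (1/l) * deriv z 0 :=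
    mul_pos (mul_pos (Real.rpow_pos_of_pos hl _) (by positivity)) hz0pos
  have hστ : σ = τ := by
    rw [hdera, hCdef] at hsgn
    rcases hσ with h1 | h1 <;> rcases hτ with h2 | h2 <;> rw [h1, h2] <;>
      rw [h1, h2] at hsgn <;> first
        | rfl
        | (exfalso; nlinarith [hCpos])
  have hba2 : a + l = b := by rw [hldef]; ring
  have hlast : 0 < -σ * deriv w (a + l) := by
    rw [hba2, hderb, hCdef, hz10, hστ]
    rcases hτ with h2 | h2 <;> rw [h2] <;> nlinarith [hCpos]
  refine ⟨l, hl, hal, ?_, hEl, ?_, hlast⟩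
  · rw [hba2]; exact hwb
  · intro t ht
    rw [hform t ht, hστ]

lemma rpow_eq_unique {γ E Ez l1 l2 : ℝ} (hγ : γ ≠ 0) (h1 : 0 < l1) (h2 : 0 < l2)
    (e1 : l1 ^ (-γ) * Ez = E) (e2 : l2 ^ (-γ) * Ez = E) (hEz : Ez ≠ 0) : l1 = l2 := by
  have h : l1 ^ (-γ) = l2 ^ (-γ) := by
    have := e1.trans e2.symm
    exact mul_right_cancel₀ hEz this
  have key : ∀ l : ℝ, 0 < l → l = (l ^ (-γ)) ^ (-(1/γ)) := by
    intro l hl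
    rw [← Real.rpow_mul hl.le, show -γ * -(1/γ) = 1 by field_simp, Real.rpow_one]
  rw [key l1 h1, key l2 h2, h]

lemma sign_pm (j : ℕ) {σ : ℝ} (hσ : σ = 1 ∨ σ = -1) :
    (-1:ℝ)^j * σ = 1 ∨ (-1:ℝ)^j * σ = -1 := by
  rcases Nat.even_or_odd j with h | h <;> rcases hσ with h2 | h2 <;>
    rw [h2] <;> simp [h.neg_one_pow]

lemma z_facts {p : ℝ} (hp : 1 < p) {z : ℝ → ℝ} (hz : ContDiff ℝ 2 z)
    (hz_eq : ∀ x ∈ Icc (0:ℝ) 1, deriv (deriv z) x + z x * |z x| ^ (p - 1) = 0)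
    (hz0 : z 0 = 0)
    (hz_pos : ∀ x ∈ Ioo (0:ℝ) 1, 0 < z x)
    (hz_symm : ∀ x ∈ Icc (0:ℝ) 1, z x = z (1 - x)) :
    0 < deriv z 0 ∧ deriv z 1 = -deriv z 0 := by
  obtain ⟨hzd, hzd1, -⟩ := cd2_facts hz
  have hzd1c : Continuous (deriv z) := hzd1.continuous
  have hp10 : p + 1 ≠ 0 := by linarith
  -- symmetry of the derivative
  have hsym : deriv z 1 = -deriv z 0 := by
    have heq : EqOn z (fun y => (1:ℝ) * z ((-1) * y + 1)) (Ioo (0:ℝ) 1) := by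
      intro y hy
      show z y = 1 * z ((-1) * y + 1)
      rw [show (-1:ℝ) * y + 1 = 1 - y by ring, one_mul]
      exact hz_symm y ⟨hy.1.le, hy.2.le⟩
    have hder : EqOn (deriv z) (fun x => (1:ℝ) * (-1) * deriv z ((-1) * x + 1)) (Ioo (0:ℝ) 1) := by
      intro x hx
      rw [deriv_eqOn_open isOpen_Ioo heq hx,
        (hasDerivAt_affine hzd 1 (-1) 1 x).deriv]
    have hcl := Set.EqOn.closure hder hzd1c
      (continuous_const.mul (hzd1c.comp ((continuous_const.mul continuous_id).add continuous_const)))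
    rw [closure_Ioo (by norm_num : (0:ℝ) ≠ 1)] at hcl
    have h0 := hcl ⟨le_refl 0, zero_le_one⟩
    simp only at h0
    norm_num at h0
    linarith
  -- positivity of the derivative at 0
  have hE := energy_const hp hz hz_eq
  have habs0 : |z 0| ^ (p+1) = 0 := by rw [hz0, abs_zero, Real.zero_rpow hp10]
  have hzhalf : 0 < z (1/2) := hz_pos (1/2) ⟨by norm_num, by norm_num⟩
  have hdz0 : deriv z 0 ≠ 0 := by
    intro h
    have h2 := hE (1/2) ⟨by norm_num, by norm_num⟩
    rw [h, habs0] at h2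
    have t2 : 0 < |z (1/2)| ^ (p+1)/(p+1) :=
      div_pos (Real.rpow_pos_of_pos (abs_pos.mpr (ne_of_gt hzhalf)) _) (by linarith)
    norm_num at h2
    nlinarith [sq_nonneg (deriv z (1/2))]
  constructor
  · rcases lt_or_gt_of_ne hdz0 with hneg | hpos
    · exfalso
      have hd := (hzd 0).hasDerivAt
      rw [hasDerivAt_iff_tendsto_slope] at hd
      have h2 : Filter.Tendsto (slope z 0) (nhdsWithin 0 (Ioi 0)) (nhds (deriv z 0)) :=
        hd.mono_left (nhdsWithin_mono 0 (fun x hx => ne_of_gt hx))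
      have h3 : ∀ᶠ x in nhdsWithin (0:ℝ) (Ioi 0), slope z 0 x < 0 :=
        h2.eventually_lt_const hneg
      have h4 : ∀ᶠ x in nhdsWithin (0:ℝ) (Ioi 0), x ∈ Ioo (0:ℝ) 1 :=
        Filter.eventually_of_mem (Ioo_mem_nhdsGT_of_mem ⟨le_refl 0, zero_lt_one⟩) (fun x hx => hx)
      obtain ⟨x, hx1, hx2⟩ := (h3.and h4).exists
      have : 0 < slope z 0 x := by
        rw [slope_def_field]
        rw [hz0]
        have := hz_pos x hx2
        have hx0 := hx2.1
        apply div_pos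
        · linarith
        · linarith
      linarith
    · exact hpos
  · exact hsym

lemma final_formula {p : ℝ} (hp : 1 < p) {z w : ℝ → ℝ} {M : ℕ} {L σ₀ : ℝ}
    (hM : 1 ≤ M) (hL : 0 < L) (hML : (M:ℝ) * L = 1)
    (hz0 : z 0 = 0) (hw1 : w 1 = 0) (hσ₀ : σ₀ = 1 ∨ σ₀ = -1)
    (hform : ∀ i : ℕ, i < M → ∀ t ∈ Icc (0:ℝ) 1,
      w (L * t + (i:ℝ) * L) = ((-1:ℝ)^i * σ₀) * L ^ (-(2/(p-1))) * z t) :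
    ∀ x ∈ Icc (0:ℝ) 1, w x = σ₀ * zNat p z M x := by
  intro x hx
  have hMR : (0:ℝ) < (M:ℝ) := by exact_mod_cast hM
  have hLM : L = 1/(M:ℝ) := by
    field_simp
    linarith [hML]
  have hLpow : L ^ (-(2/(p-1))) = (M:ℝ) ^ (2/(p-1)) := by
    rw [hLM, one_div, Real.inv_rpow hMR.le, ← Real.rpow_neg hMR.le, neg_neg]
  rcases eq_or_lt_of_le hx.2 with hx1 | hx1
  · rw [← hx1] at hw1
    rw [hw1, hx1, zNat_bc1 p z hz0, mul_zero]
  · set jz : ℤ := ⌊(M:ℝ) * x⌋ with hjzdef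
    have hjz0 : 0 ≤ jz := Int.floor_nonneg.mpr (mul_nonneg hMR.le hx.1)
    have hjzM : jz < (M:ℤ) := by
      apply Int.floor_lt.mpr
      push_cast
      nlinarith [hx.1]
    set j : ℕ := jz.toNat with hjdef
    have hjc : ((j:ℕ):ℝ) = (jz:ℝ) := by
      exact_mod_cast congrArg (Int.cast : ℤ → ℝ) (Int.toNat_of_nonneg hjz0)
    have hjM : j < M := by omega
    set t : ℝ := Int.fract ((M:ℝ) * x) with htdef
    have htIcc : t ∈ Icc (0:ℝ) 1 := ⟨Int.fract_nonneg _, (Int.fract_lt_one _).le⟩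
    have hfr : t = (M:ℝ) * x - (jz:ℝ) := rfl
    have hrep : L * t + (j:ℝ) * L = x := by
      rw [hjc, hfr]
      have : L * (M:ℝ) = 1 := by linarith [hML]
      nlinarith [this]
    have hw := hform j hjM t htIcc
    rw [hrep] at hw
    rw [hw]
    unfold zNat
    rw [← hjzdef, ← htdef, hLpow]
    have hjeven : Even jz ↔ Even j := by
      rw [show jz = (j:ℤ) by omega]
      exact Int.even_coe_nat j
    rcases Nat.even_or_odd j with he | ho
    · rw [if_pos (hjeven.mpr he), he.neg_one_pow]
      ring
    · rw [if_neg (by rw [hjeven]; exact (Nat.not_even_iff_odd.mpr ho)), ho.neg_one_pow]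
      ring

lemma forward {p : ℝ} (hp : 1 < p) {z : ℝ → ℝ}
    (hz_smooth : ContDiff ℝ 2 z)
    (hz_eq : ∀ x ∈ Icc (0:ℝ) 1, deriv (deriv z) x + z x * |z x| ^ (p - 1) = 0)
    (hz0 : z 0 = 0) (hz1 : z 1 = 0)
    (hz_pos : ∀ x ∈ Ioo (0:ℝ) 1, 0 < z x)
    (hz_symm : ∀ x ∈ Icc (0:ℝ) 1, z x = z (1 - x))
    (hz_unique : ∀ u : ℝ → ℝ, ContDiff ℝ 2 u →
      (∀ x ∈ Icc (0:ℝ) 1, deriv (deriv u) x + u x * |u x| ^ (p - 1) = 0) →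
      u 0 = 0 → u 1 = 0 → (∀ x ∈ Icc (0:ℝ) 1, 0 ≤ u x) →
      (∃ x ∈ Icc (0:ℝ) 1, u x ≠ 0) →
      ∀ x ∈ Icc (0:ℝ) 1, u x = z x)
    {w : ℝ → ℝ} (hw_smooth : ContDiff ℝ 2 w)
    (hode : ∀ x ∈ Icc (0:ℝ) 1, deriv (deriv w) x + w x * |w x| ^ (p - 1) = 0)
    (hw0 : w 0 = 0) (hw1 : w 1 = 0) :
    ∃ n : ℤ, ∀ x ∈ Icc (0:ℝ) 1, w x = zInt p z n x := by
  classical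
  obtain ⟨hz0pos, hz10⟩ := z_facts hp hz_smooth hz_eq hz0 hz_pos hz_symm
  have hp10 : p + 1 ≠ 0 := by linarith
  set Ez : ℝ := (deriv z 0)^2/2 with hEzdef
  have hEz : ∀ x ∈ Icc (0:ℝ) 1, (deriv z x)^2/2 + |z x| ^ (p+1)/(p+1) = Ez := by
    intro x hx
    rw [energy_const hp hz_smooth hz_eq x hx, hz0, abs_zero, Real.zero_rpow hp10, hEzdef]
    ring
  have hEzpos : 0 < Ez := by
    rw [hEzdef]
    have : 0 < (deriv z 0)^2 := by positivity
    linarith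
  set E : ℝ := (deriv w 0)^2/2 with hEdef
  have hE : ∀ x ∈ Icc (0:ℝ) 1, (deriv w x)^2/2 + |w x| ^ (p+1)/(p+1) = E := by
    intro x hx
    rw [energy_const hp hw_smooth hode x hx, hw0, abs_zero, Real.zero_rpow hp10, hEdef]
    ring
  rcases eq_or_ne (deriv w 0) 0 with h0 | h0
  · refine ⟨0, fun x hx => ?_⟩
    have h2 := hE x hx
    rw [hEdef, h0] at h2
    norm_num at h2
    have hwx : w x = 0 := by
      by_contra hne
      have t2 : 0 < |w x| ^ (p+1)/(p+1) :=
        div_pos (Real.rpow_pos_of_pos (abs_pos.mpr hne) _) (by linarith)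
      nlinarith [sq_nonneg (deriv w x)]
    rw [hwx]
    unfold zInt
    rw [if_pos (le_refl (0:ℤ))]
    exact (zNat_zero_left p hp z x).symm
  · have hEpos : 0 < E := by
      rw [hEdef]
      have : 0 < (deriv w 0)^2 := by positivity
      linarith
    set σ₀ : ℝ := if 0 < deriv w 0 then 1 else -1 with hσ₀def
    have hσ₀ : σ₀ = 1 ∨ σ₀ = -1 := by
      rcases lt_or_ge 0 (deriv w 0) with h | h
      · left; simp [hσ₀def, h]
      · right; simp [hσ₀def, not_lt.mpr h]
    have hsgn₀ : 0 < σ₀ * deriv w 0 := by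
      rcases lt_or_ge 0 (deriv w 0) with h | h
      · simp only [hσ₀def, if_pos h]; linarith
      · have hlt : deriv w 0 < 0 := lt_of_le_of_ne h h0
        simp only [hσ₀def, if_neg (not_lt.mpr h)]; nlinarith
    have hγ : (0:ℝ) < 2*(2/(p-1))+2 := by
      have h9 : 0 < p - 1 := by linarith
      positivity
    obtain ⟨L, hL, -, -, hLE, -, -⟩ :=
      nodal_step hp hz_smooth hz_unique hz0pos hz10 hEz hw_smooth hode hw1 hE hEpos
        (le_refl 0) zero_lt_one hw0 hσ₀ hsgn₀
    have hstep : ∀ j : ℕ,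
        ((j:ℝ)*L ≤ 1 ∧ w ((j:ℝ)*L) = 0 ∧ 0 < ((-1:ℝ)^j*σ₀) * deriv w ((j:ℝ)*L) ∧
          (∀ i : ℕ, i < j → ∀ t ∈ Icc (0:ℝ) 1,
            w (L * t + (i:ℝ)*L) = ((-1:ℝ)^i*σ₀) * L ^ (-(2/(p-1))) * z t)) →
        (j:ℝ)*L < 1 →
        ((((j+1:ℕ)):ℝ)*L ≤ 1 ∧ w (((j+1:ℕ):ℝ)*L) = 0 ∧
          0 < ((-1:ℝ)^(j+1)*σ₀) * deriv w (((j+1:ℕ):ℝ)*L) ∧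
          (∀ i : ℕ, i < j+1 → ∀ t ∈ Icc (0:ℝ) 1,
            w (L * t + (i:ℝ)*L) = ((-1:ℝ)^i*σ₀) * L ^ (-(2/(p-1))) * z t)) := by
      intro j hQ hlt
      obtain ⟨hj1, hwj, hsj, hforms⟩ := hQ
      have hσj := sign_pm j hσ₀
      have ha0 : 0 ≤ (j:ℝ)*L := by positivity
      obtain ⟨l, hl0, hll, hwl, hlE, hlform, hlder⟩ :=
        nodal_step hp hz_smooth hz_unique hz0pos hz10 hEz hw_smooth hode hw1 hE hEpos
          ha0 hlt hwj hσj hsj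
      have hlL : l = L := rpow_eq_unique (ne_of_gt hγ) hl0 hL hlE hLE (ne_of_gt hEzpos)
      rw [hlL] at hll hwl hlform hlder
      have hpt : ((j+1:ℕ):ℝ)*L = (j:ℝ)*L + L := by push_cast; ring
      refine ⟨?_, ?_, ?_, ?_⟩
      · rw [hpt]; exact hll
      · rw [hpt]; exact hwl
      · rw [hpt, show (-1:ℝ)^(j+1)*σ₀ = -((-1:ℝ)^j*σ₀) by rw [pow_succ]; ring]
        exact hlder
      · intro i hi t ht
        rcases Nat.lt_succ_iff_lt_or_eq.mp hi with h | h
        · exact hforms i h t ht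
        · subst h
          exact hlform t ht
    have hex : ∃ m : ℕ, 1 ≤ (m:ℝ)*L := by
      obtain ⟨m, hm⟩ := exists_nat_gt (1/L)
      refine ⟨m, ?_⟩
      rw [div_lt_iff₀ hL] at hm
      linarith
    set M := Nat.find hex with hMdef
    have hQall : ∀ j, j ≤ M →
        ((j:ℝ)*L ≤ 1 ∧ w ((j:ℝ)*L) = 0 ∧ 0 < ((-1:ℝ)^j*σ₀) * deriv w ((j:ℝ)*L) ∧
          (∀ i : ℕ, i < j → ∀ t ∈ Icc (0:ℝ) 1,
            w (L * t + (i:ℝ)*L) = ((-1:ℝ)^i*σ₀) * L ^ (-(2/(p-1))) * z t)) := by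
      intro j
      induction j with
      | zero =>
        intro _
        refine ⟨by norm_num, by norm_num [hw0], by norm_num; exact hsgn₀, ?_⟩
        intro i hi; omega
      | succ n ih =>
        intro hn
        have hnM : n < M := by omega
        have hnlt : (n:ℝ)*L < 1 := by
          have := Nat.find_min hex hnM
          push_neg at this
          exact this
        exact hstep n (ih (by omega)) hnlt
    obtain ⟨hle1, -, -, hforms⟩ := hQall M (le_refl M)
    have hML : (M:ℝ)*L = 1 := le_antisymm hle1 (Nat.find_spec hex)
    have hM1 : 1 ≤ M := by
      by_contra h
      have : M = 0 := by omega
      rw [this] at hML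
      norm_num at hML
    have hfin := final_formula hp hM1 hL hML hz0 hw1 hσ₀ hforms
    rcases hσ₀ with h1 | h1
    · refine ⟨(M:ℤ), fun x hx => ?_⟩
      rw [hfin x hx, h1, one_mul]
      unfold zInt
      rw [if_pos (Int.natCast_nonneg M)]
      simp
    · refine ⟨-(M:ℤ), fun x hx => ?_⟩
      rw [hfin x hx, h1]
      unfold zInt
      rw [if_neg (by omega)]
      simp

/-- A twice continuously differentiable `w` with homogeneous Dirichlet boundary conditions
satisfies `w'' + w|w|^{p-1} = 0` on `[0,1]` if and only if `w = z⁽ⁿ⁾` for some `n : ℤ`,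
where `z` is the unique nonnegative nontrivial solution. -/
theorem stmt0 (p : ℝ) (hp : 1 < p) (z : ℝ → ℝ)
    (hz_smooth : ContDiff ℝ 2 z)
    (hz_eq : ∀ x ∈ Icc (0:ℝ) 1, deriv (deriv z) x + z x * |z x| ^ (p - 1) = 0)
    (hz0 : z 0 = 0) (hz1 : z 1 = 0)
    (hz_pos : ∀ x ∈ Ioo (0:ℝ) 1, 0 < z x)
    (hz_symm : ∀ x ∈ Icc (0:ℝ) 1, z x = z (1 - x))
    (hz_unique : ∀ w : ℝ → ℝ, ContDiff ℝ 2 w →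
      (∀ x ∈ Icc (0:ℝ) 1, deriv (deriv w) x + w x * |w x| ^ (p - 1) = 0) →
      w 0 = 0 → w 1 = 0 → (∀ x ∈ Icc (0:ℝ) 1, 0 ≤ w x) →
      (∃ x ∈ Icc (0:ℝ) 1, w x ≠ 0) →
      ∀ x ∈ Icc (0:ℝ) 1, w x = z x)
    (w : ℝ → ℝ) (hw_smooth : ContDiff ℝ 2 w) :
    ((∀ x ∈ Icc (0:ℝ) 1, deriv (deriv w) x + w x * |w x| ^ (p - 1) = 0) ∧
        w 0 = 0 ∧ w 1 = 0) ↔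
      ∃ n : ℤ, ∀ x ∈ Icc (0:ℝ) 1, w x = zInt p z n x := by
  constructor
  · rintro ⟨hode, hw0, hw1⟩
    exact forward hp hz_smooth hz_eq hz0 hz1 hz_pos hz_symm hz_unique hw_smooth hode hw0 hw1
  · rintro ⟨n, hn⟩
    exact backward_full hp hz_smooth hz_eq hz0 n hw_smooth hn
end

section
/- Let p > 1 and let z : [0,1] → ℝ be continuously differentiable with z(0) = z(1) = 0 and z(x) = z(1-x) for all x ∈ [0,1]. Then for every n ∈ ℤ the function z^{(n)} is continuously differentiable and satisfies ‖z^{(n)}‖_∞ = |n|^{2/(p-1)} ‖z‖_∞ and S(z^{(n)}) = |n|^{2(p+1)/(p-1)} S(z), where ‖·‖_∞ denotes the supremum norm on [0,1]. -/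
open Set

/-- The supremum norm on `[0,1]`. -/
noncomputable def supNorm01 (v : ℝ → ℝ) : ℝ :=
  sSup ((fun x => |v x|) '' Icc (0:ℝ) 1)

/-- The potential `S(v) = ∫₀¹ ((1/2) v'(x)² − |v(x)|^{p+1}/(p+1)) dx`. -/
noncomputable def potS (p : ℝ) (v : ℝ → ℝ) : ℝ :=
  ∫ x in (0:ℝ)..1, ((1/2) * (deriv v x) ^ 2 - |v x| ^ (p + 1) / (p + 1))


noncomputable def glue (w : ℝ → ℝ) (x : ℝ) : ℝ := (-1 : ℝ) ^ ⌊x⌋ * w (Int.fract x)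

lemma neg_one_zpow_sub_one (k : ℤ) : (-1 : ℝ) ^ (k - 1) = -((-1 : ℝ) ^ k) := by
  rw [zpow_sub_one₀ (by norm_num : (-1:ℝ) ≠ 0)]
  norm_num

lemma glue_eq_right (w : ℝ → ℝ) (k : ℤ) :
    ∀ y ∈ Ico (k : ℝ) (k + 1), glue w y = (-1 : ℝ) ^ k * w (y - k) := by
  intro y hy
  have hfl : ⌊y⌋ = k := Int.floor_eq_iff.mpr ⟨hy.1, by exact_mod_cast hy.2⟩
  simp [glue, Int.fract, hfl]

lemma glue_eq_left (w : ℝ → ℝ) (hsum : w 1 = -(w 0)) (k : ℤ) :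
    ∀ y ∈ Ioc ((k : ℝ) - 1) (k : ℝ), glue w y = (-1 : ℝ) ^ (k - 1) * w (y - ((k : ℝ) - 1)) := by
  intro y hy
  rcases eq_or_lt_of_le hy.2 with rfl | hlt
  · have h1 : ((k:ℝ)) - ((k:ℝ) - 1) = 1 := by ring
    rw [h1, hsum, neg_one_zpow_sub_one]
    simp [glue]
  · have hfl : ⌊y⌋ = k - 1 := by
      refine Int.floor_eq_iff.mpr ⟨?_, ?_⟩ <;> push_cast <;> [linarith [hy.1]; linarith]
    have : Int.fract y = y - ((k:ℝ) - 1) := by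
      rw [Int.fract, hfl]; push_cast; ring
    rw [glue, hfl, this]

lemma hasDerivAt_shift {w : ℝ → ℝ} (hw : Differentiable ℝ w) (c : ℝ) (k : ℤ) (x : ℝ) :
    HasDerivAt (fun y => c * w (y - (k : ℝ))) (c * deriv w (x - k)) x := by
  have h := ((hw (x - k)).hasDerivAt.comp x ((hasDerivAt_id x).sub_const (k : ℝ)))
  simpa using h.const_mul c

lemma glue_hasDerivAt {w : ℝ → ℝ} (hw : ContDiff ℝ 1 w) (h0 : w 0 = 0) (h1 : w 1 = 0)
    (hd : deriv w 1 = -(deriv w 0)) (x : ℝ) :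
    HasDerivAt (glue w) (glue (deriv w) x) x := by
  have hdw : Differentiable ℝ w := hw.differentiable one_ne_zero
  have hsum : w 1 = -(w 0) := by rw [h0, h1, neg_zero]
  rcases eq_or_ne (Int.fract x) 0 with hfr | hfr
  · -- x is an integer, x = ⌊x⌋
    have hxk : x = ((⌊x⌋ : ℤ) : ℝ) := by
      have := Int.self_sub_floor x
      rw [hfr] at this; linarith
    have hgoal : glue (deriv w) x = (-1 : ℝ) ^ ⌊x⌋ * deriv w 0 := by
      rw [glue, hfr]
    rw [hgoal]
    have hright : HasDerivWithinAt (glue w) ((-1 : ℝ) ^ ⌊x⌋ * deriv w 0) (Ici x) x := by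
      have hder := (hasDerivAt_shift hdw ((-1 : ℝ) ^ ⌊x⌋) ⌊x⌋ x).hasDerivWithinAt (s := Ici x)
      rw [show x - (⌊x⌋ : ℝ) = 0 by rw [← hxk] at *; linarith] at hder
      refine hder.congr_of_eventuallyEq ?_ ?_
      · filter_upwards [Ico_mem_nhdsGE_of_mem
          (⟨le_rfl, by rw [← hxk]; linarith [Int.lt_floor_add_one x]⟩ :
            x ∈ Ico x ((⌊x⌋ : ℝ) + 1))] with y hy
        exact glue_eq_right w ⌊x⌋ y ⟨hxk ▸ hy.1, hy.2⟩
      · rw [glue, hfr, show x - ((⌊x⌋:ℤ):ℝ) = 0 by linarith]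
    have hleft : HasDerivWithinAt (glue w) ((-1 : ℝ) ^ ⌊x⌋ * deriv w 0) (Iic x) x := by
      have hder := (hasDerivAt_shift hdw (-((-1 : ℝ) ^ ⌊x⌋)) (⌊x⌋ - 1) x).hasDerivWithinAt
        (s := Iic x)
      have hx1 : x - ((⌊x⌋ - 1 : ℤ) : ℝ) = 1 := by push_cast; rw [← hxk] at *; linarith
      rw [hx1, hd] at hder
      have hder2 : HasDerivWithinAt (fun y => -((-1:ℝ) ^ ⌊x⌋) * w (y - ((⌊x⌋ - 1 : ℤ) : ℝ)))
          ((-1 : ℝ) ^ ⌊x⌋ * deriv w 0) (Iic x) x := by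
        rw [show (-1 : ℝ) ^ ⌊x⌋ * deriv w 0 = -((-1:ℝ) ^ ⌊x⌋) * -deriv w 0 by ring]; exact hder
      refine hder2.congr_of_eventuallyEq ?_ ?_
      · filter_upwards [Ioc_mem_nhdsLE_of_mem
          (⟨by rw [← hxk]; linarith, le_rfl⟩ : x ∈ Ioc ((⌊x⌋ : ℝ) - 1) x)] with y hy
        have h3 := glue_eq_left w hsum ⌊x⌋ y ⟨hy.1, hxk ▸ hy.2⟩
        rw [h3, neg_one_zpow_sub_one]; push_cast; ring_nf
      · rw [glue, hfr, h0, hx1, h1]; ring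
    have := hleft.union hright
    rw [Iic_union_Ici] at this
    exact this.hasDerivAt (by simp)
  · -- x is not an integer
    have hlt : ((⌊x⌋ : ℤ) : ℝ) < x := by
      rcases lt_or_eq_of_le (Int.floor_le x) with h | h
      · exact h
      · exact absurd (by linarith [Int.self_sub_floor x] : Int.fract x = 0) hfr
    have hmem : x ∈ Ioo ((⌊x⌋:ℤ) : ℝ) (⌊x⌋ + 1) := ⟨hlt, Int.lt_floor_add_one x⟩
    have hnb : Ioo ((⌊x⌋:ℤ) : ℝ) (⌊x⌋ + 1) ∈ nhds x := isOpen_Ioo.mem_nhds hmem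
    have heq : glue w =ᶠ[nhds x] fun y => (-1 : ℝ) ^ ⌊x⌋ * w (y - ⌊x⌋) := by
      filter_upwards [hnb] with y hy
      exact glue_eq_right w ⌊x⌋ y ⟨hy.1.le, hy.2⟩
    have hder := hasDerivAt_shift hdw ((-1 : ℝ) ^ ⌊x⌋) ⌊x⌋ x
    have hgoal : glue (deriv w) x = (-1 : ℝ) ^ ⌊x⌋ * deriv w (x - ⌊x⌋) := by
      rw [glue, ← Int.self_sub_floor]
    rw [hgoal]
    exact hder.congr_of_eventuallyEq heq

lemma glue_continuous {w : ℝ → ℝ} (hw : Continuous w) (hsum : w 1 = -(w 0)) :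
    Continuous (glue w) := by
  rw [continuous_iff_continuousAt]
  intro x
  have hshift : ∀ (c : ℝ) (k : ℤ), Continuous (fun y : ℝ => c * w (y - (k : ℝ))) :=
    fun c k => continuous_const.mul (hw.comp (continuous_id.sub continuous_const))
  rcases eq_or_ne (Int.fract x) 0 with hfr | hfr
  · have hxk : x = ((⌊x⌋ : ℤ) : ℝ) := by
      have := Int.self_sub_floor x
      rw [hfr] at this; linarith
    have hright : ContinuousWithinAt (glue w) (Ici x) x := by
      refine (((hshift ((-1:ℝ)^⌊x⌋) ⌊x⌋).continuousAt).continuousWithinAt).congr_of_eventuallyEq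
        ?_ ?_
      · filter_upwards [Ico_mem_nhdsGE_of_mem
          (⟨le_rfl, by rw [← hxk]; linarith [Int.lt_floor_add_one x]⟩ :
            x ∈ Ico x ((⌊x⌋ : ℝ) + 1))] with y hy
        exact glue_eq_right w ⌊x⌋ y ⟨hxk ▸ hy.1, hy.2⟩
      · rw [glue, hfr, show x - ((⌊x⌋:ℤ):ℝ) = 0 by linarith]
    have hleft : ContinuousWithinAt (glue w) (Iic x) x := by
      refine (((hshift (-((-1:ℝ)^⌊x⌋)) (⌊x⌋ - 1)).continuousAt).continuousWithinAt).congr_of_eventuallyEq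
        ?_ ?_
      · filter_upwards [Ioc_mem_nhdsLE_of_mem
          (⟨by rw [← hxk]; linarith, le_rfl⟩ : x ∈ Ioc ((⌊x⌋ : ℝ) - 1) x)] with y hy
        have h3 := glue_eq_left w hsum ⌊x⌋ y ⟨hy.1, hxk ▸ hy.2⟩
        rw [h3, neg_one_zpow_sub_one]; push_cast; ring_nf
      · rw [glue, hfr, show x - ((⌊x⌋ - 1 : ℤ):ℝ) = 1 by push_cast; linarith, hsum]
        ring
    have := hleft.union hright
    rw [Iic_union_Ici, continuousWithinAt_univ] at this
    exact this
  · have hlt : ((⌊x⌋ : ℤ) : ℝ) < x := by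
      rcases lt_or_eq_of_le (Int.floor_le x) with h | h
      · exact h
      · exact absurd (by linarith [Int.self_sub_floor x] : Int.fract x = 0) hfr
    have hnb : Ioo ((⌊x⌋:ℤ) : ℝ) (⌊x⌋ + 1) ∈ nhds x :=
      isOpen_Ioo.mem_nhds ⟨hlt, Int.lt_floor_add_one x⟩
    refine ((hshift ((-1:ℝ)^⌊x⌋) ⌊x⌋).continuousAt).congr ?_
    filter_upwards [hnb] with y hy
    exact (glue_eq_right w ⌊x⌋ y ⟨hy.1.le, hy.2⟩).symm

lemma glue_contDiff {w : ℝ → ℝ} (hw : ContDiff ℝ 1 w) (h0 : w 0 = 0) (h1 : w 1 = 0)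
    (hd : deriv w 1 = -(deriv w 0)) : ContDiff ℝ 1 (glue w) := by
  have hder : ∀ x, HasDerivAt (glue w) (glue (deriv w) x) x := glue_hasDerivAt hw h0 h1 hd
  refine contDiff_one_iff_deriv.mpr ⟨fun x => (hder x).differentiableAt, ?_⟩
  have : deriv (glue w) = glue (deriv w) := funext fun x => (hder x).deriv
  rw [this]
  exact glue_continuous (hw.continuous_deriv le_rfl) hd

lemma zNat_eq_glue (p : ℝ) (z : ℝ → ℝ) (m : ℕ) (x : ℝ) :
    zNat p z m x = (m:ℝ)^(2/(p-1)) * glue z ((m:ℝ)*x) := by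
  rw [zNat, glue]
  rcases Int.even_or_odd ⌊(m:ℝ)*x⌋ with he | ho
  · rw [if_pos he, he.neg_one_zpow, one_mul]
  · rw [if_neg (Int.not_even_iff_odd.mpr ho), ho.neg_one_zpow]; ring

lemma zInt_eq_glue (p : ℝ) (z : ℝ → ℝ) (n : ℤ) (x : ℝ) :
    zInt p z n x = (if 0 ≤ n then (1:ℝ) else -1) *
      ((n.natAbs:ℝ)^(2/(p-1)) * glue z ((n.natAbs:ℝ)*x)) := by
  rw [zInt]
  by_cases hn : 0 ≤ n
  · rw [if_pos hn, if_pos hn, one_mul, show n.toNat = n.natAbs by omega, zNat_eq_glue]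
  · rw [if_neg hn, if_neg hn, show (-n).toNat = n.natAbs by omega, zNat_eq_glue]; ring

noncomputable def FF (p : ℝ) (z : ℝ → ℝ) (y : ℝ) : ℝ :=
  1/2 * (glue (deriv z) y)^2 - |glue z y| ^ (p + 1) / (p + 1)

theorem stmt1 (p : ℝ) (hp : 1 < p) (z : ℝ → ℝ) (hz : ContDiff ℝ 1 z)
    (hz0 : z 0 = 0) (hz1 : z 1 = 0)
    (hsymm : ∀ x ∈ Icc (0:ℝ) 1, z x = z (1 - x)) (n : ℤ) :
    ContDiffOn ℝ 1 (zInt p z n) (Icc (0:ℝ) 1) ∧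
    supNorm01 (zInt p z n) = |(n : ℝ)| ^ (2 / (p - 1)) * supNorm01 z ∧
    potS p (zInt p z n) = |(n : ℝ)| ^ (2 * (p + 1) / (p - 1)) * potS p z := by
  have hp1 : (0:ℝ) < p - 1 := by linarith
  have hdz : Differentiable ℝ z := hz.differentiable one_ne_zero
  have hzc : Continuous z := hz.continuous
  have hdc : Continuous (deriv z) := hz.continuous_deriv le_rfl
  have hd : deriv z 1 = -(deriv z 0) := by
    have hIoo : EqOn (deriv z) (fun x => -(deriv z (1 - x))) (Ioo (0:ℝ) 1) := by
      intro x hx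
      have h1 : HasDerivAt (fun y => z (1 - y)) (-(deriv z (1-x))) x := by
        have h2 := ((hdz (1-x)).hasDerivAt.comp x
          ((hasDerivAt_const x (1:ℝ)).sub (hasDerivAt_id x)))
        simpa [Function.comp_def] using h2
      have h2 : deriv z x = deriv (fun y => z (1 - y)) x := by
        apply Filter.EventuallyEq.deriv_eq
        filter_upwards [isOpen_Ioo.mem_nhds hx] with y hy
        exact hsymm y ⟨hy.1.le, hy.2.le⟩
      rw [h2, h1.deriv]
    have hcl := hIoo.closure hdc ((hdc.comp (continuous_const.sub continuous_id)).neg)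
    rw [closure_Ioo (by norm_num : (0:ℝ) ≠ 1)] at hcl
    have h3 := hcl (right_mem_Icc.mpr zero_le_one)
    simpa using h3
  set m : ℕ := n.natAbs with hm
  set c : ℝ := (m:ℝ)^(2/(p-1)) with hc
  have hcnn : 0 ≤ c := Real.rpow_nonneg (Nat.cast_nonneg m) _
  set e : ℝ := (if 0 ≤ n then (1:ℝ) else -1) with he
  have habs_e : |e| = 1 := by by_cases hn : 0 ≤ n <;> simp [he, hn]
  have he2 : e^2 = 1 := by by_cases hn : 0 ≤ n <;> simp [he, hn]
  have hfx : ∀ x, zInt p z n x = e * (c * glue z ((m:ℝ)*x)) := fun x => zInt_eq_glue p z n x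
  have hnabs : |(n:ℝ)| = (m:ℝ) := by
    rw [hm, Nat.cast_natAbs, Int.cast_abs]
  have hZC1 : ContDiff ℝ 1 (glue z) :=
    glue_contDiff hz hz0 hz1 hd
  refine ⟨?_, ?_, ?_⟩
  · have hfun : zInt p z n = fun x => e * (c * glue z ((m:ℝ)*x)) := funext hfx
    rw [hfun]
    exact (contDiff_const.mul (contDiff_const.mul
      (hZC1.comp (contDiff_const.mul contDiff_id)))).contDiffOn
  · -- sup norm
    have habs : ∀ x, |zInt p z n x| = c * |z (Int.fract ((m:ℝ)*x))| := by
      intro x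
      rw [hfx x, abs_mul, habs_e, one_mul, abs_mul, abs_of_nonneg hcnn, glue, abs_mul]
      have h1 : |(-1:ℝ)^⌊(m:ℝ)*x⌋| = 1 := by
        rcases Int.even_or_odd ⌊(m:ℝ)*x⌋ with hpar|hpar <;>
          simp [hpar.neg_one_zpow]
      rw [h1, one_mul]
    have himg : (fun x => |zInt p z n x|) '' Icc (0:ℝ) 1 =
        (fun t => c * |z t|) '' Icc (0:ℝ) 1 := by
      apply Set.Subset.antisymm
      · rintro _ ⟨x, hx, rfl⟩
        exact ⟨Int.fract ((m:ℝ)*x), ⟨Int.fract_nonneg _, (Int.fract_lt_one _).le⟩,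
          (habs x).symm⟩
      · rintro _ ⟨t, ht, rfl⟩
        by_cases hm0 : m = 0
        · have hc0 : c = 0 := by
            rw [hc, hm0]
            push_cast
            exact Real.zero_rpow (by positivity)
          refine ⟨0, ⟨le_rfl, zero_le_one⟩, ?_⟩
          show |zInt p z n 0| = c * |z t|
          rw [habs 0, hc0]; ring
        · rcases eq_or_lt_of_le ht.2 with heq | hlt
          · refine ⟨0, ⟨le_rfl, zero_le_one⟩, ?_⟩
            show |zInt p z n 0| = c * |z t|
            rw [habs 0, mul_zero, Int.fract_zero, hz0, heq, hz1]
          · have hmne : ((m:ℕ):ℝ) ≠ 0 := by exact_mod_cast hm0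
            have hm1 : (1:ℝ) ≤ (m:ℝ) := by exact_mod_cast Nat.one_le_iff_ne_zero.mpr hm0
            refine ⟨t / m, ⟨div_nonneg ht.1 (by positivity), by rw [div_le_one (by linarith)]; linarith [ht.2]⟩, ?_⟩
            show |zInt p z n (t / (m:ℝ))| = c * |z t|
            rw [habs, mul_div_cancel₀ _ hmne, Int.fract_eq_self.mpr ⟨ht.1, hlt⟩]
    obtain ⟨M, hM⟩ := (isCompact_Icc.image hzc.abs).exists_isGreatest
      ((Set.nonempty_Icc.mpr zero_le_one).image _)
    have hsupz : supNorm01 z = M := hM.csSup_eq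
    have h2 : (fun t => c * |z t|) '' Icc (0:ℝ) 1 =
        (fun a => c * a) '' ((fun t => |z t|) '' Icc (0:ℝ) 1) := by
      rw [← Set.image_comp]; rfl
    have hgr : IsGreatest ((fun a => c * a) '' ((fun t => |z t|) '' Icc (0:ℝ) 1)) (c * M) := by
      constructor
      · exact Set.mem_image_of_mem _ hM.1
      · rintro _ ⟨a, ha, rfl⟩
        exact mul_le_mul_of_nonneg_left (hM.2 ha) hcnn
    rw [supNorm01, himg, h2, hgr.csSup_eq, hsupz, hnabs]
  · -- potential
    by_cases hm0 : m = 0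
    · have hn0 : n = 0 := by omega
      have hm' : ((m:ℕ):ℝ) = 0 := by rw [hm0]; norm_num
      have hzero : zInt p z n = fun _ => (0:ℝ) := by
        funext x
        rw [hfx x, hm']
        simp [glue, hz0]
      have h6 : potS p (fun _ : ℝ => (0:ℝ)) = 0 := by
        rw [potS]
        simp [deriv_const, abs_zero, Real.zero_rpow (show p + 1 ≠ 0 by linarith)]
      have h7 : |((n:ℤ):ℝ)| = 0 := by rw [hn0]; norm_num
      rw [hzero, h6, h7, Real.zero_rpow (ne_of_gt (div_pos (by linarith) hp1))]
      ring
    · have hmposn : 0 < m := Nat.pos_of_ne_zero hm0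
      have hmpos : (0:ℝ) < (m:ℝ) := by exact_mod_cast hmposn
      have hmne : ((m:ℕ):ℝ) ≠ 0 := ne_of_gt hmpos
      -- derivative of zInt
      have hder : ∀ x, HasDerivAt (zInt p z n) (e * c * ((m:ℝ) * glue (deriv z) ((m:ℝ)*x))) x := by
        intro x
        have h1 : HasDerivAt (fun y:ℝ => (m:ℝ)*y) (m:ℝ) x := by
          simpa using (hasDerivAt_id x).const_mul (m:ℝ)
        have h2 := (glue_hasDerivAt hz hz0 hz1 hd ((m:ℝ)*x)).comp x h1
        have h3 := h2.const_mul (e*c)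
        have h4 : HasDerivAt (zInt p z n) (e * c * (glue (deriv z) ((m:ℝ)*x) * (m:ℝ))) x := by
          refine h3.congr_of_eventuallyEq (Filter.Eventually.of_forall fun y => ?_)
          rw [hfx y]; simp [Function.comp]; ring
        convert h4 using 1; ring
      have hderiv : deriv (zInt p z n) = fun x => e * c * ((m:ℝ) * glue (deriv z) ((m:ℝ)*x)) :=
        funext fun x => (hder x).deriv
      set K := (m:ℝ)^(2*(p+1)/(p-1)) with hK
      have hc2 : c^2 * (m:ℝ)^2 = K := by
        rw [hc, hK, ← Real.rpow_natCast ((m:ℝ)^(2/(p-1))) 2, ← Real.rpow_natCast (m:ℝ) 2,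
          ← Real.rpow_mul hmpos.le, ← Real.rpow_add hmpos]
        congr 1
        push_cast
        field_simp
        ring
      have hcpK : c ^ (p+1) = K := by
        rw [hc, hK, ← Real.rpow_mul hmpos.le]
        congr 1
        field_simp
      have hGcont : Continuous (glue (deriv z)) := glue_continuous hdc hd
      have hFcont : Continuous (FF p z) := by
        refine Continuous.sub (continuous_const.mul ((hGcont.pow 2))) ?_
        exact (Continuous.div_const ((hZC1.continuous.abs).rpow_const
          (fun x => Or.inr (by linarith))) _)
      have hint : ∀ t₁ t₂, IntervalIntegrable (FF p z) MeasureTheory.volume t₁ t₂ :=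
        fun t₁ t₂ => hFcont.intervalIntegrable _ _
      have hglue_shift : ∀ w : ℝ → ℝ, ∀ y : ℝ, glue w (y + 1) = -(glue w y) := by
        intro w y
        rw [glue, glue, Int.floor_add_one, Int.fract_add_one,
          zpow_add_one₀ (by norm_num : (-1:ℝ) ≠ 0)]
        ring
      have hper : Function.Periodic (FF p z) 1 := by
        intro y
        rw [FF, FF, hglue_shift, hglue_shift, neg_sq, abs_neg]
      have hpt : ∀ x, 1/2 * (deriv (zInt p z n) x)^2 - |zInt p z n x|^(p+1)/(p+1)
          = K * FF p z ((m:ℝ)*x) := by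
        intro x
        rw [hderiv, hfx x]
        have h1 : (e * c * ((m:ℝ) * glue (deriv z) ((m:ℝ)*x)))^2
            = c^2 * (m:ℝ)^2 * (glue (deriv z) ((m:ℝ)*x))^2 := by
          rw [mul_pow, mul_pow, mul_pow, he2, one_mul]; ring
        have h2 : |e * (c * glue z ((m:ℝ)*x))| ^ (p+1)
            = c^(p+1) * |glue z ((m:ℝ)*x)|^(p+1) := by
          rw [abs_mul, habs_e, one_mul, abs_mul, abs_of_nonneg hcnn,
            Real.mul_rpow hcnn (abs_nonneg _)]
        rw [h1, h2, hc2, hcpK, FF]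
        ring
      rw [potS, intervalIntegral.integral_congr (g := fun x => K * FF p z ((m:ℝ)*x))
        (fun x _ => hpt x), intervalIntegral.integral_const_mul]
      have hcomp : ∫ x in (0:ℝ)..1, FF p z ((m:ℝ)*x)
          = ((m:ℝ))⁻¹ * ∫ y in (0:ℝ)..(m:ℝ), FF p z y := by
        have h5 := intervalIntegral.integral_comp_mul_left (a := (0:ℝ)) (b := 1)
          (f := FF p z) (c := (m:ℝ)) hmne
        simpa using h5
      have hmul : ∫ y in (0:ℝ)..(m:ℝ), FF p z y = (m:ℝ) * ∫ y in (0:ℝ)..1, FF p z y := by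
        have h5 := hper.intervalIntegral_add_zsmul_eq (m : ℤ) 0 hint
        simpa using h5
      have hFz_int : ∫ y in (0:ℝ)..1, FF p z y = potS p z := by
        rw [potS]
        apply intervalIntegral.integral_congr
        intro y hy
        rw [Set.uIcc_of_le zero_le_one] at hy
        rcases eq_or_lt_of_le hy.2 with heq | hlt
        · subst heq
          have e1 : ∀ w : ℝ → ℝ, glue w 1 = -(w 0) := by
            intro w
            rw [glue, Int.floor_one, Int.fract_one, zpow_one]
            ring
          show FF p z 1 = 1/2 * deriv z 1 ^ 2 - |z 1| ^ (p + 1) / (p + 1)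
          rw [FF, e1 (deriv z), e1 z, hz0, hz1, hd]
          norm_num
        · have hfl : ⌊y⌋ = 0 := Int.floor_eq_iff.mpr (by constructor <;> push_cast <;>
            [exact hy.1; linarith])
          have e2 : ∀ w : ℝ → ℝ, glue w y = w y := by
            intro w
            rw [glue, hfl]
            have hfr2 : Int.fract y = y := by rw [Int.fract, hfl]; push_cast; ring
            rw [hfr2, zpow_zero, one_mul]
          show FF p z y = 1/2 * deriv z y ^ 2 - |z y| ^ (p + 1) / (p + 1)
          rw [FF, e2 (deriv z), e2 z]
      rw [hcomp, hmul, hFz_int, hnabs, ← hK]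
      field_simp
end

section
/- Let p > 1, M > 0 and δ > 0, and set T := δ/4 + 2^{(p+1)/2}(p+1) / ( (p-1)² (Mδ)^{(p-1)/2} ). Then there is no differentiable function y : [0,T] → ℝ with y(0) ≥ 0 satisfying y'(t) ≥ 2M + ((p-1)/(p+1)) (max(y(t),0))^{(p+1)/2} for all t ∈ [0,T]; that is, every solution of the differential inequality y' ≥ 2M + ((p-1)/(p+1)) y^{(p+1)/2} with nonnegative initial value blows up before time T. -/
open Set Real

set_option maxHeartbeats 1000000 in
/-- Every solution of the differential inequality
`y' ≥ 2M + ((p-1)/(p+1)) y^{(p+1)/2}` with nonnegative initial value blows up before time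
`T = δ/4 + 2^{(p+1)/2}(p+1)/((p-1)²(Mδ)^{(p-1)/2})`: no such solution can be defined on all
of `[0,T]`. -/
theorem stmt5 (p M δ T : ℝ) (hp : 1 < p) (hM : 0 < M) (hδ : 0 < δ)
    (hT : T = δ / 4 +
      (2:ℝ) ^ ((p + 1) / 2) * (p + 1) / ((p - 1) ^ 2 * (M * δ) ^ ((p - 1) / 2))) :
    ¬ ∃ y y' : ℝ → ℝ,
      (∀ t ∈ Icc (0:ℝ) T, HasDerivWithinAt y (y' t) (Icc (0:ℝ) T) t) ∧
      0 ≤ y 0 ∧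
      ∀ t ∈ Icc (0:ℝ) T,
        2 * M + ((p - 1) / (p + 1)) * (max (y t) 0) ^ ((p + 1) / 2) ≤ y' t := by
  rintro ⟨y, y', hderiv, hy0, hineq⟩
  set q : ℝ := (p + 1) / 2 with hq
  set c : ℝ := (p - 1) / (p + 1) with hc
  have hp1 : (0:ℝ) < p + 1 := by linarith
  have hp1' : (0:ℝ) < p - 1 := by linarith
  have hq1 : 1 < q := by rw [hq]; linarith
  have hc0 : 0 < c := div_pos hp1' hp1
  have ha : (0:ℝ) < (M * δ) ^ ((p - 1) / 2) := rpow_pos_of_pos (by positivity) _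
  have hE : 0 < (2:ℝ) ^ ((p + 1) / 2) * (p + 1) / ((p - 1) ^ 2 * (M * δ) ^ ((p - 1) / 2)) := by
    apply div_pos (by positivity) (by positivity)
  have hTδ : δ / 4 < T := by rw [hT]; linarith
  have hT0 : 0 < T := by linarith
  -- interior facts
  have hIcc : interior (Icc (0:ℝ) T) = Ioo 0 T := interior_Icc
  have hDA : ∀ t ∈ Ioo (0:ℝ) T, HasDerivAt y (y' t) t := fun t ht =>
    (hderiv t (Ioo_subset_Icc_self ht)).hasDerivAt (Icc_mem_nhds ht.1 ht.2)
  have hycont : ContinuousOn y (Icc 0 T) := fun t ht => (hderiv t ht).continuousWithinAt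
  have hydiff : DifferentiableOn ℝ y (interior (Icc (0:ℝ) T)) := by
    rw [hIcc]; exact fun t ht => ((hDA t ht).differentiableAt).differentiableWithinAt
  have hbound : ∀ t ∈ interior (Icc (0:ℝ) T), 2 * M ≤ deriv y t := by
    rw [hIcc]; intro t ht
    rw [(hDA t ht).deriv]
    have h1 := hineq t (Ioo_subset_Icc_self ht)
    have h2 : 0 ≤ c * (max (y t) 0) ^ q := by positivity
    linarith
  -- growth: for s ≤ t in Icc, 2M(t-s) ≤ y t - y s
  have grow := (convex_Icc (0:ℝ) T).mul_sub_le_image_sub_of_le_deriv hycont hydiff hbound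
  have hδT : δ / 4 ∈ Icc (0:ℝ) T := ⟨by linarith, hTδ.le⟩
  have hTT : T ∈ Icc (0:ℝ) T := ⟨hT0.le, le_rfl⟩
  have h0T : (0:ℝ) ∈ Icc (0:ℝ) T := ⟨le_rfl, hT0.le⟩
  have hyδ : M * δ / 2 ≤ y (δ / 4) := by
    have := grow 0 h0T (δ / 4) hδT (by linarith)
    nlinarith
  have hyδ0 : 0 < y (δ / 4) := lt_of_lt_of_le (by positivity) hyδ
  -- y positive and monotone on [δ/4, T]
  have hmono : ∀ t ∈ Icc (δ/4) T, y (δ/4) ≤ y t := by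
    intro t ht
    have := grow (δ/4) hδT t ⟨by linarith [ht.1], ht.2⟩ ht.1
    nlinarith [ht.1]
  have hypos : ∀ t ∈ Icc (δ/4) T, 0 < y t := fun t ht => lt_of_lt_of_le hyδ0 (hmono t ht)
  have hyT : 0 < y T := hypos T ⟨hTδ.le, le_rfl⟩
  set ε : ℝ := (q - 1) * (2 * M) * (y T) ^ (-q) with hε
  have hε0 : 0 < ε :=
    mul_pos (mul_pos (by linarith) (by linarith)) (rpow_pos_of_pos hyT (-q))
  set K : ℝ := (q - 1) * c with hK
  have hK0 : 0 < K := mul_pos (by linarith) hc0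
  -- z = y ^ (1 - q)
  set z : ℝ → ℝ := fun t => (y t) ^ (1 - q) with hz
  have hsub : Icc (δ/4) T ⊆ Icc (0:ℝ) T := Icc_subset_Icc (by linarith) le_rfl
  have hzcont : ContinuousOn z (Icc (δ/4) T) := by
    apply ContinuousOn.rpow_const (hycont.mono hsub)
    exact fun t ht => Or.inl (ne_of_gt (hypos t ht))
  have hIcc2 : interior (Icc (δ/4) T) = Ioo (δ/4) T := interior_Icc
  have hDAz : ∀ t ∈ Ioo (δ/4) T,
      HasDerivAt z ((1 - q) * (y t) ^ (1 - q - 1) * y' t) t := by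
    intro t ht
    have ht' : t ∈ Ioo (0:ℝ) T := ⟨by linarith [ht.1, hδ], ht.2⟩
    have hy' := hDA t ht'
    have hne : y t ≠ 0 := ne_of_gt (hypos t ⟨ht.1.le, ht.2.le⟩)
    exact (Real.hasDerivAt_rpow_const (Or.inl hne)).comp t hy'
  have hzdiff : DifferentiableOn ℝ z (interior (Icc (δ/4) T)) := by
    rw [hIcc2]; exact fun t ht => ((hDAz t ht).differentiableAt).differentiableWithinAt
  have hzbound : ∀ t ∈ interior (Icc (δ/4) T), deriv z t ≤ -(K + ε) := by
    rw [hIcc2]; intro t ht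
    rw [(hDAz t ht).deriv]
    have htmem : t ∈ Icc (δ/4) T := ⟨ht.1.le, ht.2.le⟩
    have hyt : 0 < y t := hypos t htmem
    have hytT : y t ≤ y T := by
      have := grow t (hsub htmem) T hTT ht.2.le
      nlinarith [ht.2.le]
    have hder : 2 * M + c * (y t) ^ q ≤ y' t := by
      have := hineq t (hsub htmem)
      rwa [max_eq_left hyt.le] at this
    have hcoef : (1 - q) * (y t) ^ (1 - q - 1) < 0 :=
      mul_neg_of_neg_of_pos (by linarith) (rpow_pos_of_pos hyt _)
    have h1 : (1 - q) * (y t) ^ (1 - q - 1) * y' t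
        ≤ (1 - q) * (y t) ^ (1 - q - 1) * (2 * M + c * (y t) ^ q) :=
      mul_le_mul_of_nonpos_left hder hcoef.le
    have hpow : (y t) ^ (1 - q - 1) * (y t) ^ q = 1 := by
      rw [← Real.rpow_add hyt]; norm_num
    have hanti : (y T) ^ (-q) ≤ (y t) ^ (-q) :=
      rpow_le_rpow_of_nonpos hyt hytT (by linarith)
    have h2 : (1 - q) * (2 * M) * (y t) ^ (-q) ≤ -ε := by
      rw [hε]
      have := mul_le_mul_of_nonpos_left hanti
        (show (1 - q) * (2 * M) ≤ 0 by nlinarith)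
      linarith [this]
    have hexp : (1:ℝ) - q - 1 = -q := by ring
    rw [hexp] at h1 ⊢
    calc (1 - q) * (y t) ^ (-q) * y' t
        ≤ (1 - q) * (y t) ^ (-q) * (2 * M + c * (y t) ^ q) := h1
      _ = (1 - q) * (2 * M) * (y t) ^ (-q)
          + (1 - q) * c * ((y t) ^ (-q) * (y t) ^ q) := by ring
      _ = (1 - q) * (2 * M) * (y t) ^ (-q) + (1 - q) * c := by
          rw [show (y t) ^ (-q) * (y t) ^ q = 1 by
            rw [← Real.rpow_add hyt]; norm_num]
          ring
      _ ≤ -ε + (1 - q) * c := add_le_add_left h2 _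
      _ = -(K + ε) := by rw [hK]; ring
  have shrink := (convex_Icc (δ/4) T).image_sub_le_mul_sub_of_deriv_le hzcont hzdiff hzbound
    (δ/4) ⟨le_rfl, hTδ.le⟩ T ⟨hTδ.le, le_rfl⟩ hTδ.le
  -- z (δ/4) ≤ (Mδ/2)^(1-q)
  have hzδ : z (δ/4) ≤ (M * δ / 2) ^ (1 - q) :=
    rpow_le_rpow_of_nonpos (by positivity) hyδ (by linarith)
  -- key identity: (Mδ/2)^(1-q) = K * (T - δ/4)
  have hTsub : T - δ/4 = (2:ℝ) ^ ((p + 1) / 2) * (p + 1) / ((p - 1) ^ 2 * (M * δ) ^ ((p - 1) / 2)) := by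
    rw [hT]; ring
  have h2pow : (2:ℝ) ^ ((p + 1) / 2) = 2 ^ ((p - 1) / 2) * 2 := by
    rw [show (p+1)/2 = (p-1)/2 + 1 by ring, Real.rpow_add_one two_ne_zero]
  have hid : (M * δ / 2) ^ (1 - q) = K * (T - δ/4) := by
    rw [hTsub, hK, hc, hq]
    have e1 : (1:ℝ) - (p+1)/2 = -((p-1)/2) := by ring
    rw [e1, Real.rpow_neg (by positivity), Real.div_rpow (by positivity) (by norm_num),
      h2pow]
    have h2p : (0:ℝ) < (2:ℝ) ^ ((p - 1) / 2) := rpow_pos_of_pos two_pos _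
    rw [inv_div]
    field_simp
    ring
  have hzT : 0 < z T := rpow_pos_of_pos hyT _
  have hfinal : z T - z (δ/4) ≤ -(K + ε) * (T - δ/4) := shrink
  have hE0 : 0 < T - δ/4 := by linarith
  have h3 : K * (T - δ/4) + ε * (T - δ/4) = (K + ε) * (T - δ/4) := by ring
  linarith [mul_pos hε0 hE0, h3]
end

section
/- Let p > 1 and a > 0. Suppose ψ : [0,∞) → [0,∞) is differentiable on all of [0,∞) and satisfies ψ'(t) ≥ −4a + 2((p-1)/(p+1)) ψ(t)^{(p+1)/2} for every t ≥ 0. Then ψ(0) ≤ ( 2a(p+1)/(p-1) )^{2/(p+1)}. -/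
open Set

set_option maxHeartbeats 1000000 in
/-- If `ψ : [0,∞) → [0,∞)` is (globally) differentiable and satisfies
`ψ' ≥ −4a + 2((p-1)/(p+1)) ψ^{(p+1)/2}` on `[0,∞)`, then
`ψ(0) ≤ (2a(p+1)/(p-1))^{2/(p+1)}`. -/
theorem stmt7 (p a : ℝ) (hp : 1 < p) (ha : 0 < a) (ψ ψ' : ℝ → ℝ)
    (hnonneg : ∀ t ∈ Ici (0:ℝ), 0 ≤ ψ t)
    (hderiv : ∀ t ∈ Ici (0:ℝ), HasDerivWithinAt ψ (ψ' t) (Ici (0:ℝ)) t)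
    (hineq : ∀ t ∈ Ici (0:ℝ),
      -4 * a + 2 * ((p - 1) / (p + 1)) * (ψ t) ^ ((p + 1) / 2) ≤ ψ' t) :
    ψ 0 ≤ (2 * a * (p + 1) / (p - 1)) ^ (2 / (p + 1)) := by
  by_contra hcon
  push_neg at hcon
  set q : ℝ := (p + 1) / 2 with hq_def
  set c : ℝ := 2 * ((p - 1) / (p + 1)) with hc_def
  clear_value q c
  have hq1 : 1 < q := by rw [hq_def]; linarith
  have hq0 : 0 < q := by linarith
  have hc0 : 0 < c := by
    rw [hc_def]
    have h1 : 0 < p - 1 := by linarith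
    have h2 : 0 < p + 1 := by linarith
    positivity
  set B : ℝ := 2 * a * (p + 1) / (p - 1) with hB_def
  clear_value B
  have hB0 : 0 < B := by
    rw [hB_def]
    apply div_pos (by nlinarith) (by linarith)
  set M : ℝ := B ^ (2 / (p + 1)) with hM_def
  clear_value M
  have hM0 : 0 < M := by rw [hM_def]; exact Real.rpow_pos_of_pos hB0 _
  have hMq : M ^ q = B := by
    rw [hM_def, ← Real.rpow_mul hB0.le]
    rw [show 2 / (p + 1) * q = 1 by rw [hq_def]; field_simp]
    exact Real.rpow_one B
  have hcMq : c * M ^ q = 4 * a := by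
    have h1 : p + 1 ≠ 0 := by linarith
    have h2 : p - 1 ≠ 0 := by linarith
    rw [hMq, hc_def, hB_def]
    field_simp
    ring
  have hineq' : ∀ t ∈ Ici (0:ℝ), c * (ψ t ^ q - M ^ q) ≤ ψ' t := by
    intro t ht
    rw [mul_sub, hcMq]
    linarith [hineq t ht]
  have hcont : ContinuousOn ψ (Ici (0:ℝ)) := fun t ht =>
    (hderiv t ht).continuousWithinAt
  set M' : ℝ := (M + ψ 0) / 2 with hM'_def
  clear_value M'
  have hM'1 : M < M' := by rw [hM'_def]; linarith
  have hM'2 : M' < ψ 0 := by rw [hM'_def]; linarith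
  have hM'0 : 0 < M' := lt_trans hM0 hM'1
  -- Step 1: ψ stays above M'
  have step1 : ∀ t ∈ Ici (0:ℝ), M' ≤ ψ t := by
    by_contra h
    push_neg at h
    obtain ⟨t1, ht1, hlt⟩ := h
    set S : Set ℝ := Icc 0 t1 ∩ ψ ⁻¹' Iic M' with hS_def
    have ht1S : t1 ∈ S := ⟨⟨ht1, le_refl _⟩, hlt.le⟩
    have hSne : S.Nonempty := ⟨t1, ht1S⟩
    have hSbdd : BddBelow S := ⟨0, fun s hs => hs.1.1⟩
    have hSclosed : IsClosed S :=
      ContinuousOn.preimage_isClosed_of_isClosed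
        (hcont.mono (Icc_subset_Ici_self)) isClosed_Icc isClosed_Iic
    have htstar := hSclosed.csInf_mem hSne hSbdd
    set t₀ : ℝ := sInf S with ht0_def
    obtain ⟨⟨ht00, ht01⟩, ht0ψ⟩ := htstar
    have ht0ψ' : ψ t₀ ≤ M' := ht0ψ
    have ht0pos : 0 < t₀ := by
      rcases lt_or_eq_of_le ht00 with h | h
      · exact h
      · exfalso; rw [← h] at ht0ψ'; linarith
    have hmono : StrictMonoOn ψ (Icc 0 t₀) := by
      refine strictMonoOn_of_hasDerivWithinAt_pos (convex_Icc 0 t₀) (f' := ψ')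
        (hcont.mono (Icc_subset_Ici_self)) (fun x hx => ?_) (fun x hx => ?_)
      · rw [interior_Icc] at hx
        exact ((hderiv x (le_of_lt hx.1)).mono
          (by rw [interior_Icc]; exact fun y hy => le_of_lt hy.1))
      · rw [interior_Icc] at hx
        have hxS : x ∉ S := fun hxS => absurd (csInf_le hSbdd hxS) (not_le.mpr hx.2)
        have hxIcc : x ∈ Icc 0 t1 := ⟨hx.1.le, le_trans hx.2.le ht01⟩
        have hψx : M' < ψ x := by
          by_contra hc'
          exact hxS ⟨hxIcc, not_lt.mp hc'⟩
        have hMx : M < ψ x := lt_trans hM'1 hψx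
        have hpow : M ^ q < ψ x ^ q := Real.rpow_lt_rpow hM0.le hMx hq0
        have := hineq' x (le_of_lt hx.1)
        nlinarith
    have := hmono (left_mem_Icc.mpr ht0pos.le) (right_mem_Icc.mpr ht0pos.le) ht0pos
    linarith
  -- Step 2: linear growth
  set δ : ℝ := c * (M' ^ q - M ^ q) with hδ_def
  clear_value δ
  have hδ0 : 0 < δ := by
    have : M ^ q < M' ^ q := Real.rpow_lt_rpow hM0.le hM'1 hq0
    rw [hδ_def]; nlinarith
  have hψ'δ : ∀ t ∈ Ici (0:ℝ), δ ≤ ψ' t := by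
    intro t ht
    have h1 := hineq' t ht
    have h2 : M' ^ q ≤ ψ t ^ q := Real.rpow_le_rpow hM'0.le (step1 t ht) hq0.le
    rw [hδ_def]; nlinarith
  have step2 : ∀ t ∈ Ici (0:ℝ), ψ 0 + δ * t ≤ ψ t := by
    have hmono : MonotoneOn (fun t => ψ t - δ * t) (Ici (0:ℝ)) := by
      refine monotoneOn_of_hasDerivWithinAt_nonneg (convex_Ici 0)
        (f' := fun t => ψ' t - δ)
        (hcont.sub (continuousOn_const.mul continuousOn_id))
        (fun x hx => ?_) (fun x hx => ?_)
      · rw [interior_Ici] at hx ⊢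
        have h1 : HasDerivWithinAt (fun t => δ * t) δ (Ioi (0:ℝ)) x := by
          simpa using ((hasDerivAt_id x).const_mul δ).hasDerivWithinAt
        have h2 : HasDerivWithinAt ψ (ψ' x) (Ioi (0:ℝ)) x := (hderiv x (Ioi_subset_Ici_self hx)).mono Ioi_subset_Ici_self
        exact h2.sub h1
      · rw [interior_Ici] at hx
        have := hψ'δ x (Ioi_subset_Ici_self hx)
        linarith
    intro t ht
    have := hmono (self_mem_Ici) ht ht
    simp only [mul_zero, sub_zero] at this
    linarith
  -- Step 3: eventually ψ ≥ 2M
  set T₁ : ℝ := 2 * M / δ with hT1_def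
  clear_value T₁
  have hT1nn : 0 ≤ T₁ := by rw [hT1_def]; positivity
  have step3 : ∀ t, T₁ ≤ t → 2 * M ≤ ψ t := by
    intro t ht
    have ht0 : (0:ℝ) ≤ t := le_trans hT1nn ht
    have h1 := step2 t ht0
    have h2 : 2 * M ≤ δ * t := by
      rw [hT1_def] at ht
      calc 2 * M = δ * (2 * M / δ) := by field_simp
        _ ≤ δ * t := by apply mul_le_mul_of_nonneg_left ht hδ0.le
    have h3 := hnonneg 0 self_mem_Ici
    linarith
  -- Step 4: φ = ψ^(1-q) decreases at definite rate, contradiction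
  set k : ℝ := (q - 1) * c / 2 with hk_def
  clear_value k
  have hk0 : 0 < k := by rw [hk_def]; nlinarith
  have hψpos : ∀ t ∈ Ici (0:ℝ), 0 < ψ t := fun t ht => lt_of_lt_of_le hM'0 (step1 t ht)
  -- superlinear derivative bound on [T₁, ∞)
  have hsup : ∀ t, T₁ ≤ t → c / 2 * ψ t ^ q ≤ ψ' t := by
    intro t ht
    have ht0 : (0:ℝ) ≤ t := le_trans hT1nn ht
    have h2M := step3 t ht
    have hψt0 : 0 < ψ t := hψpos t ht0
    have hMle : M ≤ ψ t / 2 := by linarith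
    have h1 : M ^ q ≤ (ψ t / 2) ^ q := Real.rpow_le_rpow hM0.le hMle hq0.le
    have h2 : (ψ t / 2) ^ q = ψ t ^ q / 2 ^ q := Real.div_rpow hψt0.le (by norm_num) q
    have h3 : (2:ℝ) ≤ 2 ^ q := by
      calc (2:ℝ) = 2 ^ (1:ℝ) := (Real.rpow_one 2).symm
        _ ≤ 2 ^ q := Real.rpow_le_rpow_of_exponent_le (by norm_num) hq1.le
    have h4 : ψ t ^ q / 2 ^ q ≤ ψ t ^ q / 2 := by
      have hnn : 0 ≤ ψ t ^ q := Real.rpow_nonneg hψt0.le q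
      have h2q : (0:ℝ) < 2 ^ q := Real.rpow_pos_of_pos two_pos q
      rw [div_le_div_iff₀ h2q two_pos]
      exact mul_le_mul_of_nonneg_left h3 hnn
    have h6 : M ^ q ≤ ψ t ^ q / 2 := by rw [h2] at h1; linarith
    have h7 := mul_le_mul_of_nonneg_left h6 hc0.le
    have h5 := hineq' t ht0
    rw [mul_sub] at h5
    linarith
  -- the antitone function
  have hantit : AntitoneOn (fun t => ψ t ^ (1 - q) + k * t) (Ici T₁) := by
    refine antitoneOn_of_hasDerivWithinAt_nonpos (convex_Ici T₁)
      (f' := fun t => ψ' t * (1 - q) * ψ t ^ (1 - q - 1) + k)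
      ?_ (fun x hx => ?_) (fun x hx => ?_)
    · apply ContinuousOn.add
      · apply ContinuousOn.rpow_const (hcont.mono (Ici_subset_Ici.mpr hT1nn))
        intro t ht
        exact Or.inl (ne_of_gt (hψpos t (le_trans hT1nn ht)))
      · exact continuousOn_const.mul continuousOn_id
    · rw [interior_Ici] at hx ⊢
      have hx0 : (0:ℝ) ≤ x := le_trans hT1nn hx.le
      have h1 : HasDerivWithinAt (fun t => k * t) k (Ioi T₁) x := by
        simpa using ((hasDerivAt_id x).const_mul k).hasDerivWithinAt
      have h2 : HasDerivWithinAt ψ (ψ' x) (Ioi T₁) x :=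
        (hderiv x hx0).mono (fun y hy => le_trans hT1nn (le_of_lt hy))
      have h3 := h2.rpow_const (p := 1 - q) (Or.inl (ne_of_gt (hψpos x hx0)))
      exact h3.add h1
    · rw [interior_Ici] at hx
      have hx0 : (0:ℝ) ≤ x := le_trans hT1nn hx.le
      have hψx : 0 < ψ x := hψpos x hx0
      have hs := hsup x hx.le
      have hpow : ψ x ^ (1 - q - 1) * ψ x ^ q = 1 := by
        rw [← Real.rpow_add hψx]
        norm_num
      have hppos : 0 < ψ x ^ (1 - q - 1) := Real.rpow_pos_of_pos hψx _
      have hψ'pos : 0 < ψ' x :=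
        lt_of_lt_of_le (mul_pos (by linarith : (0:ℝ) < c / 2) (Real.rpow_pos_of_pos hψx q)) hs
      -- (1-q) * ψ^(−q) * ψ' + k ≤ 0
      have key : (q - 1) * (ψ x ^ (1 - q - 1) * ψ' x) ≥ (q - 1) * (ψ x ^ (1 - q - 1) * (c / 2 * ψ x ^ q)) := by
        apply mul_le_mul_of_nonneg_left _ (by linarith)
        exact mul_le_mul_of_nonneg_left hs hppos.le
      have : ψ x ^ (1 - q - 1) * (c / 2 * ψ x ^ q) = c / 2 := by
        rw [show ψ x ^ (1 - q - 1) * (c / 2 * ψ x ^ q) = c / 2 * (ψ x ^ (1 - q - 1) * ψ x ^ q) by ring, hpow, mul_one]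
      rw [this] at key
      rw [hk_def]
      nlinarith [key]
  -- derive the contradiction
  set φ₁ : ℝ := ψ T₁ ^ (1 - q) with hφ1_def
  clear_value φ₁
  have hφ1pos : 0 < φ₁ := by rw [hφ1_def]; exact Real.rpow_pos_of_pos (hψpos T₁ hT1nn) _
  set T : ℝ := T₁ + (φ₁ / k + 1) with hT_def
  clear_value T
  have hTT1 : T₁ ≤ T := by
    rw [hT_def]
    have : 0 < φ₁ / k + 1 := by positivity
    linarith
  have h1 : ψ T ^ (1 - q) + k * T ≤ ψ T₁ ^ (1 - q) + k * T₁ :=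
    hantit self_mem_Ici hTT1 hTT1
  have hφTpos : 0 < ψ T ^ (1 - q) :=
    Real.rpow_pos_of_pos (hψpos T (le_trans hT1nn hTT1)) _
  have hkT : k * T = k * T₁ + φ₁ + k := by
    rw [hT_def]
    field_simp
    ring
  linarith [h1, hkT, hφ1_def, hφTpos, hk0]
end

section
/- Let 1 < p < 5 and a, B > 0. Then there exists K > 0, depending only on p, a and B, such that the following holds: for every function v : [0,1] → ℝ with v(0) = v(1) = 0 admitting g ∈ L²(0,1) with v(x) = ∫₀ˣ g(s) ds for all x ∈ [0,1], if 0 ≤ (1/2)∫₀¹ g(s)² ds − (1/(p+1))∫₀¹ |v(s)|^{p+1} ds ≤ a and ∫₀¹ v(s)² ds ≤ B, then sup_{x ∈ [0,1]} |v(x)| ≤ K. -/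
open Set MeasureTheory

private lemma abs_le_amgm (z lam : ℝ) (hl : 0 < lam) : |z| ≤ lam/2 + z^2/(2*lam) := by
  rw [div_add_div _ _ (by norm_num) (by positivity), le_div_iff₀ (by positivity)]
  nlinarith [sq_nonneg (|z| - lam), sq_abs z, abs_nonneg z]

/-- bootstrap closing lemma: if `1 ≤ Q`, `Q^4 ≤ A + D * Q^(p-1)` with `0 < A`, `0 ≤ D`,
`p < 5`, `1 < p`, then `Q` is bounded. -/
private lemma bootstrap (p A D Q : ℝ) (hp1 : 1 < p) (hp5 : p < 5) (hA : 0 < A) (hD : 0 ≤ D)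
    (hQ1 : 1 ≤ Q) (h : Q^4 ≤ A + D * Q^(p-1)) :
    Q ≤ max 1 (max ((2*D) ^ ((5-p)⁻¹)) ((2*A) ^ ((4:ℝ)⁻¹))) := by
  by_contra hcon
  push_neg at hcon
  have hQ0 : (0:ℝ) < Q := by linarith
  have h5p : (0:ℝ) < 5 - p := by linarith
  have hQD : (2*D) ^ ((5-p)⁻¹) < Q := lt_of_le_of_lt (le_max_left _ _) ((le_max_right _ _).trans_lt hcon)
  have hQA : (2*A) ^ ((4:ℝ)⁻¹) < Q := lt_of_le_of_lt (le_max_right _ _) ((le_max_right _ _).trans_lt hcon)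
  have h1 : 2*D < Q ^ (5-p) := by
    have := Real.rpow_lt_rpow (Real.rpow_nonneg (by linarith) _) hQD h5p
    rwa [Real.rpow_inv_rpow (by linarith) (ne_of_gt h5p)] at this
  have h2 : 2*A < Q ^ 4 := by
    have h := Real.rpow_lt_rpow (z := (4:ℝ)) (Real.rpow_nonneg (by linarith) _) hQA (by norm_num)
    rw [Real.rpow_inv_rpow (by linarith) (by norm_num)] at h
    rwa [show ((4:ℝ)) = ((4:ℕ):ℝ) by norm_num, Real.rpow_natCast] at h
  have h3 : Q ^ (5-p) * Q ^ (p-1) = Q ^ 4 := by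
    rw [← Real.rpow_add hQ0]
    rw [show (5 - p + (p - 1) : ℝ) = ((4:ℕ):ℝ) by push_cast; ring, Real.rpow_natCast]
  have h4 : (0:ℝ) ≤ Q ^ (p-1) := Real.rpow_nonneg hQ0.le _
  nlinarith [mul_le_mul_of_nonneg_right h1.le h4]

/-- For `1 < p < 5`: a uniform sup-norm bound, depending only on `p`, `a`, `B`, for all
Dirichlet functions `v(x) = ∫₀ˣ g` with `g ∈ L²(0,1)`, whose potential
`S(v) = (1/2)∫₀¹ g² − (1/(p+1))∫₀¹ |v|^{p+1}` lies in `[0,a]` and whose `L²`-norm squared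
is at most `B`. -/
theorem stmt8 (p a B : ℝ) (hp1 : 1 < p) (hp5 : p < 5) (ha : 0 < a) (hB : 0 < B) :
    ∃ K > (0:ℝ), ∀ v g : ℝ → ℝ,
      v 0 = 0 → v 1 = 0 →
      MemLp g 2 (volume.restrict (Ioc (0:ℝ) 1)) →
      (∀ x ∈ Icc (0:ℝ) 1, v x = ∫ s in (0:ℝ)..x, g s) →
      0 ≤ (1/2) * (∫ s in (0:ℝ)..1, g s ^ 2)
          - (1/(p+1)) * ∫ s in (0:ℝ)..1, |v s| ^ (p + 1) →
      (1/2) * (∫ s in (0:ℝ)..1, g s ^ 2)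
          - (1/(p+1)) * (∫ s in (0:ℝ)..1, |v s| ^ (p + 1)) ≤ a →
      (∫ s in (0:ℝ)..1, v s ^ 2) ≤ B →
      ∀ x ∈ Icc (0:ℝ) 1, |v x| ≤ K := by
  have hp1' : (0:ℝ) < p + 1 := by linarith
  set C : ℝ := 1 + Real.sqrt (2*B) with hCdef
  have hC1 : 1 ≤ C := by
    have := Real.sqrt_nonneg (2*B); simp only [hCdef]; linarith
  have hC0 : 0 < C := by linarith
  set A : ℝ := 1 + 2*a with hAdef
  set D : ℝ := (2*B/(p+1)) * C ^ (p-1) with hDdef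
  have hA0 : 0 < A := by simp only [hAdef]; linarith
  have hD0 : 0 ≤ D := by
    have : (0:ℝ) ≤ C ^ (p-1) := Real.rpow_nonneg hC0.le _
    have h2 : (0:ℝ) ≤ 2*B/(p+1) := by positivity
    exact mul_nonneg h2 this
  set K₀ : ℝ := max 1 (max ((2*D) ^ ((5-p)⁻¹)) ((2*A) ^ ((4:ℝ)⁻¹))) with hK₀def
  have hK₀1 : 1 ≤ K₀ := le_max_left _ _
  clear_value K₀ D A C
  refine ⟨C * K₀, mul_pos hC0 (lt_of_lt_of_le one_pos hK₀1), ?_⟩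
  intro v g hv0 hv1 hg hvg hS0 hSa hL2 x hx
  clear hv0 hv1 hS0
  haveI : IsFiniteMeasure (volume.restrict (Ioc (0:ℝ) 1)) := by
    constructor
    rw [Measure.restrict_apply_univ, Real.volume_Ioc]
    simp
  have hgI' : IntegrableOn g (Ioc (0:ℝ) 1) := hg.integrable (by norm_num)
  have hg2I' : IntegrableOn (fun s => g s ^ 2) (Ioc (0:ℝ) 1) := hg.integrable_sq
  have hgI : IntegrableOn g (Icc (0:ℝ) 1) := (integrableOn_Icc_iff_integrableOn_Ioc (by simp)).mpr hgI'
  have hg2I : IntegrableOn (fun s => g s ^ 2) (Icc (0:ℝ) 1) :=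
    (integrableOn_Icc_iff_integrableOn_Ioc (by simp)).mpr hg2I'
  set w : ℝ → ℝ := fun t => ∫ s in (0:ℝ)..t, g s with hwdef
  have hvg' : ∀ x ∈ Icc (0:ℝ) 1, v x = w x := hvg
  have hsubIcc : ∀ u t : ℝ, u ∈ Icc (0:ℝ) 1 → t ∈ Icc (0:ℝ) 1 → uIcc u t ⊆ Icc (0:ℝ) 1 := by
    intro u t hu ht
    rw [show Icc (0:ℝ) 1 = uIcc (0:ℝ) 1 by rw [uIcc_of_le]; norm_num]
    exact uIcc_subset_uIcc (by rwa [uIcc_of_le (by norm_num)]) (by rwa [uIcc_of_le (by norm_num)])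
  have iiG : ∀ u t : ℝ, u ∈ Icc (0:ℝ) 1 → t ∈ Icc (0:ℝ) 1 → IntervalIntegrable g volume u t :=
    fun u t hu ht => (hgI.mono_set (hsubIcc u t hu ht)).intervalIntegrable
  have iiG2 : ∀ u t : ℝ, u ∈ Icc (0:ℝ) 1 → t ∈ Icc (0:ℝ) 1 →
      IntervalIntegrable (fun s => g s ^ 2) volume u t :=
    fun u t hu ht => (hg2I.mono_set (hsubIcc u t hu ht)).intervalIntegrable
  set E : ℝ := ∫ s in (0:ℝ)..1, g s ^ 2 with hEdef
  have hE0 : 0 ≤ E :=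
    intervalIntegral.integral_nonneg (by norm_num) (fun s _ => sq_nonneg _)
  -- subinterval integral of g² is at most E
  have hsubE : ∀ u t : ℝ, u ∈ Icc (0:ℝ) 1 → t ∈ Icc (0:ℝ) 1 → u ≤ t →
      (∫ s in u..t, g s ^ 2) ≤ E := by
    intro u t hu ht hut
    have i1 := iiG2 0 u (by norm_num) hu
    have i2 := iiG2 u t hu ht
    have i3 := iiG2 t 1 ht (by norm_num)
    have e1 : (∫ s in (0:ℝ)..u, g s ^2) + (∫ s in u..t, g s ^2) = ∫ s in (0:ℝ)..t, g s ^2 :=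
      intervalIntegral.integral_add_adjacent_intervals i1 i2
    have e2 : (∫ s in (0:ℝ)..t, g s ^2) + (∫ s in t..1, g s ^2) = E :=
      intervalIntegral.integral_add_adjacent_intervals (iiG2 0 t (by norm_num) ht) i3
    have n1 : 0 ≤ ∫ s in (0:ℝ)..u, g s ^2 :=
      intervalIntegral.integral_nonneg hu.1 (fun s _ => sq_nonneg _)
    have n3 : 0 ≤ ∫ s in t..1, g s ^2 :=
      intervalIntegral.integral_nonneg ht.2 (fun s _ => sq_nonneg _)
    linarith
  -- continuity of w
  have hwc : ContinuousOn w (Icc (0:ℝ) 1) := by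
    have h := intervalIntegral.continuousOn_primitive_interval
      (a := 0) (b := 1) (μ := volume) (f := g)
      (by rwa [uIcc_of_le (by norm_num)])
    rwa [uIcc_of_le (by norm_num)] at h
  -- difference bound
  have hdiff : ∀ u t : ℝ, u ∈ Icc (0:ℝ) 1 → t ∈ Icc (0:ℝ) 1 → u ≤ t → ∀ lam : ℝ, 0 < lam →
      |w t - w u| ≤ (lam * (t - u) + E / lam) / 2 := by
    intro u t hu ht hut lam hl
    have e1 : (∫ s in (0:ℝ)..u, g s) + (∫ s in u..t, g s) = ∫ s in (0:ℝ)..t, g s :=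
      intervalIntegral.integral_add_adjacent_intervals (iiG 0 u (by norm_num) hu) (iiG u t hu ht)
    have hwt : w t - w u = ∫ s in u..t, g s := by
      simp only [hwdef]; linarith
    rw [hwt]
    have h1 : |∫ s in u..t, g s| ≤ ∫ s in u..t, |g s| :=
      intervalIntegral.abs_integral_le_integral_abs hut
    have h2 : (∫ s in u..t, |g s|) ≤ ∫ s in u..t, (lam/2 + g s ^2 / (2*lam)) := by
      apply intervalIntegral.integral_mono_on hut ((iiG u t hu ht).abs)
      · exact intervalIntegrable_const.add ((iiG2 u t hu ht).div_const _)
      · exact fun s _ => abs_le_amgm (g s) lam hl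
    have h3 : (∫ s in u..t, (lam/2 + g s ^2 / (2*lam)))
        = lam/2 * (t - u) + (∫ s in u..t, g s ^2) / (2*lam) := by
      rw [intervalIntegral.integral_add intervalIntegrable_const ((iiG2 u t hu ht).div_const _),
        intervalIntegral.integral_const, intervalIntegral.integral_div]
      simp [mul_comm]
    have h4 : (∫ s in u..t, g s ^2) ≤ E := hsubE u t hu ht hut
    have h5 : (∫ s in u..t, g s ^2) / (2*lam) ≤ E / (2*lam) := by gcongr
    have : E / (2*lam) = E / lam / 2 := by ring
    linarith
  clear_value E
  -- integrability and L² bound of w²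
  have hw2I : IntegrableOn (fun s => w s ^ 2) (Icc (0:ℝ) 1) :=
    (hwc.pow 2).integrableOn_Icc
  have hwB : ∫ s in Ioc (0:ℝ) 1, w s ^ 2 ≤ B := by
    have he : (∫ s in (0:ℝ)..1, v s ^ 2) = ∫ s in Ioc (0:ℝ) 1, w s ^ 2 := by
      rw [intervalIntegral.integral_of_le (by norm_num)]
      exact setIntegral_congr_fun measurableSet_Ioc
        (fun s hs => by rw [hvg' s (Ioc_subset_Icc_self hs)])
    linarith [he ▸ hL2]
  -- a point with small value in any subinterval
  have havg : ∀ c δ : ℝ, 0 ≤ c → 0 < δ → c + δ ≤ 1 →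
      ∃ y ∈ Ioc c (c+δ), w y ^ 2 ≤ 2*B/δ := by
    intro c δ hc hδ hcδ
    by_contra hno
    push_neg at hno
    have hsub2 : Ioc c (c+δ) ⊆ Ioc (0:ℝ) 1 := Ioc_subset_Ioc hc hcδ
    have hint : IntegrableOn (fun s => w s ^2) (Ioc c (c+δ)) :=
      hw2I.mono_set (hsub2.trans Ioc_subset_Icc_self)
    have hge : 2*B/δ * ((volume (Ioc c (c+δ))).toReal) ≤ ∫ s in Ioc c (c+δ), w s ^2 :=
      setIntegral_ge_of_const_le_real measurableSet_Ioc
        (by rw [Real.volume_Ioc]; exact ENNReal.ofReal_ne_top)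
        (fun y hy => (hno y hy).le) hint
    have hvol : ((volume (Ioc c (c+δ))).toReal) = δ := by
      rw [Real.volume_Ioc, ENNReal.toReal_ofReal (by linarith)]; ring
    rw [hvol, div_mul_cancel₀ _ (ne_of_gt hδ)] at hge
    have hmono : (∫ s in Ioc c (c+δ), w s ^2) ≤ ∫ s in Ioc (0:ℝ) 1, w s ^2 :=
      setIntegral_mono_set (hw2I.mono_set Ioc_subset_Icc_self)
        (Filter.Eventually.of_forall (fun s => sq_nonneg _))
        (HasSubset.Subset.eventuallyLE hsub2)
    linarith
  clear_value w
  clear hwdef hvg hg hgI' hg2I' hgI hg2I iiG iiG2 hsubE hL2 hw2I this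
  -- the quantity Q
  set Q : ℝ := (1+E) ^ ((4:ℝ)⁻¹) with hQdef
  have hQ4 : Q ^ 4 = 1 + E := by
    rw [hQdef, show ((4:ℝ)⁻¹) = (((4:ℕ)):ℝ)⁻¹ by norm_num]
    exact Real.rpow_inv_natCast_pow (by linarith) (by norm_num)
  have hQ1 : 1 ≤ Q := Real.one_le_rpow (by linarith) (by norm_num)
  have hQ0 : (0:ℝ) < Q := by linarith
  clear_value Q
  clear hQdef
  -- uniform bound on |w|
  have hsup : ∀ z ∈ Icc (0:ℝ) 1, |w z| ≤ C * Q := by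
    intro z hz
    set δ : ℝ := 1 / Q^2 with hδdef
    have hQ2 : (0:ℝ) < Q^2 := pow_pos hQ0 2
    have hδ0 : 0 < δ := by rw [hδdef]; exact div_pos one_pos hQ2
    have hδ1 : δ ≤ 1 := by
      rw [hδdef, div_le_one hQ2]; nlinarith [hQ1]
    set c := min z (1-δ) with hcdef
    have hc0 : 0 ≤ c := le_min hz.1 (by linarith)
    have hc1 : c + δ ≤ 1 := by have := min_le_right z (1-δ); linarith
    obtain ⟨y, hy, hy2⟩ := havg c δ hc0 hδ0 hc1
    have hyI : y ∈ Icc (0:ℝ) 1 := ⟨by linarith [hy.1], by linarith [hy.2]⟩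
    have hzc : c ≤ z := min_le_left _ _
    have hzcδ : z ≤ c + δ := by
      rcases le_total z (1-δ) with h|h
      · rw [hcdef, min_eq_left h]; linarith
      · rw [hcdef, min_eq_right h]; linarith [hz.2]
    have hyc1 : c < y := hy.1
    have hyc2 : y ≤ c + δ := hy.2
    clear_value c δ
    have key : ∀ u t : ℝ, u ∈ Icc (0:ℝ) 1 → t ∈ Icc (0:ℝ) 1 → u ≤ t → t - u ≤ δ →
        |w t - w u| ≤ Q := by
      intro u t hu ht hut htu
      have hQ3 : (0:ℝ) < Q^3 := pow_pos hQ0 3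
      have h := hdiff u t hu ht hut (Q^3) hQ3
      have h1 : Q^3 * (t-u) ≤ Q^3 * δ := mul_le_mul_of_nonneg_left htu hQ3.le
      have h2 : Q^3 * δ = Q := by
        rw [hδdef]; field_simp [hQ0.ne']
      have h3 : E / Q^3 ≤ Q := by
        rw [div_le_iff₀ hQ3]
        have e : Q * Q^3 = Q^4 := by ring
        linarith [hQ4, hE0, e]
      linarith
    have hdq : |w z - w y| ≤ Q := by
      rcases le_total z y with h|h
      · rw [abs_sub_comm]; exact key z y hz hyI h (by linarith)
      · exact key y z hyI hz h (by linarith)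
    have hwy : |w y| ≤ Real.sqrt (2*B) * Q := by
      have h2B : (0:ℝ) ≤ 2*B := by linarith
      have hy2' : w y ^2 ≤ 2*B*Q^2 := by
        have he : 2*B/δ = 2*B*Q^2 := by rw [hδdef]; field_simp
        linarith [he ▸ hy2]
      calc |w y| = Real.sqrt (w y ^ 2) := (Real.sqrt_sq_eq_abs _).symm
        _ ≤ Real.sqrt (2*B*Q^2) := Real.sqrt_le_sqrt hy2'
        _ = Real.sqrt (2*B) * Q := by
            rw [Real.sqrt_mul h2B, Real.sqrt_sq hQ0.le]
    calc |w z| = |w y + (w z - w y)| := by congr 1; ring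
      _ ≤ |w y| + |w z - w y| := abs_add_le _ _
      _ ≤ Real.sqrt (2*B) * Q + Q := by linarith
      _ = C * Q := by rw [hCdef]; ring
  -- bound the nonlinear integral
  set T : ℝ := C * Q with hTdef
  have hT1 : 1 ≤ T := by rw [hTdef]; nlinarith [hC1, hQ1]
  have hpt : ∀ s ∈ Icc (0:ℝ) 1, |w s| ^ (p+1) ≤ T ^ (p-1) * w s ^ 2 := by
    intro s hs
    rcases eq_or_ne (w s) 0 with h0|h0
    · rw [h0]
      rw [abs_zero, Real.zero_rpow (by linarith : p+1 ≠ 0)]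
      positivity
    · have habs : 0 < |w s| := abs_pos.mpr h0
      have e1 : |w s| ^ (p+1) = |w s| ^ (p-1) * |w s| ^ (2:ℝ) := by
        rw [← Real.rpow_add habs]; congr 1; ring
      have e2 : |w s| ^ (2:ℝ) = w s ^2 := by
        rw [show (2:ℝ) = ((2:ℕ):ℝ) by norm_num, Real.rpow_natCast, sq_abs]
      rw [e1, e2]
      exact mul_le_mul_of_nonneg_right
        (Real.rpow_le_rpow (abs_nonneg _) (hsup s hs) (by linarith)) (sq_nonneg _)
  have hIvw : (∫ s in (0:ℝ)..1, |v s| ^ (p+1)) = ∫ s in (0:ℝ)..1, |w s| ^ (p+1) := by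
    apply intervalIntegral.integral_congr
    intro s hs
    rw [uIcc_of_le (by norm_num)] at hs
    show |v s| ^ (p+1) = |w s| ^ (p+1)
    rw [hvg' s hs]
  have hIbound : (∫ s in (0:ℝ)..1, |w s| ^ (p+1)) ≤ T ^ (p-1) * B := by
    have i1 : IntervalIntegrable (fun s => |w s| ^ (p+1)) volume 0 1 := by
      apply ContinuousOn.intervalIntegrable
      rw [uIcc_of_le (by norm_num)]
      exact (hwc.abs).rpow_const (fun s _ => Or.inr (by linarith))
    have i2 : IntervalIntegrable (fun s => T ^ (p-1) * w s ^ 2) volume 0 1 := by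
      apply ContinuousOn.intervalIntegrable
      rw [uIcc_of_le (by norm_num)]
      exact continuousOn_const.mul (hwc.pow 2)
    have h1 := intervalIntegral.integral_mono_on (by norm_num) i1 i2 hpt
    have h2 : (∫ s in (0:ℝ)..1, T ^ (p-1) * w s ^2) = T ^ (p-1) * ∫ s in (0:ℝ)..1, w s ^2 :=
      intervalIntegral.integral_const_mul _ _
    have h3 : (∫ s in (0:ℝ)..1, w s ^2) ≤ B := by
      rw [intervalIntegral.integral_of_le (by norm_num)]
      exact hwB
    have hT0 : (0:ℝ) ≤ T ^ (p-1) := Real.rpow_nonneg (by linarith) _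
    calc (∫ s in (0:ℝ)..1, |w s| ^ (p+1)) ≤ ∫ s in (0:ℝ)..1, T ^ (p-1) * w s ^2 := h1
      _ = T ^ (p-1) * ∫ s in (0:ℝ)..1, w s ^2 := h2
      _ ≤ T ^ (p-1) * B := mul_le_mul_of_nonneg_left h3 hT0
  -- bootstrap
  have h1 : (1/(p+1)) * (∫ s in (0:ℝ)..1, |v s| ^ (p+1)) ≤ (1/(p+1)) * (T^(p-1)*B) :=
    mul_le_mul_of_nonneg_left (by rw [hIvw]; exact hIbound) (by positivity)
  have hEb : E ≤ 2*a + 2 * ((1/(p+1)) * (T^(p-1)*B)) := by linarith [hSa, h1]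
  have hTp : T ^ (p-1) = C ^ (p-1) * Q ^ (p-1) := Real.mul_rpow hC0.le hQ0.le
  have hQb : Q ^ 4 ≤ A + D * Q ^ (p-1) := by
    rw [hTp] at hEb
    have e : D * Q ^ (p-1) = 2 * ((1/(p+1)) * (C ^ (p-1) * Q ^ (p-1) * B)) := by
      rw [hDdef]; ring
    rw [hQ4, hAdef]
    linarith [hEb, e]
  have hQK := bootstrap p A D Q hp1 hp5 hA0 hD0 hQ1 hQb
  rw [← hK₀def] at hQK
  rw [hvg' x hx]
  calc |w x| ≤ C * Q := hsup x hx
    _ ≤ C * K₀ := mul_le_mul_of_nonneg_left hQK hC0.le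
end
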